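/- arXiv:2311.10981 — 4 statements merged into one kernel-verified Lean document; each statement's English description precedes it below -/
import Mathlib

section
/- Let a ∈ (0,1], δ > 0, and p ∈ (1,∞). Define J : (1,∞) → ℝ by J(t) = t^{1−(a+δ)} if a+δ < 1, J(t) = log t if a+δ = 1, and J(t) = 1 if a+δ > 1. Then there exists a constant C > 0 such that for every τ ≥ 1, ∫_{τ+1}^{2τ} (1+t²)^{−p(1−a)/2} · J(t)^{p−1} · (t−τ)^{−(a+δ)} dt ≤ C. -/
open MeasureTheory Real

lemma key_bound (τ θ' A : ℝ) (hτ : 1 ≤ τ) (hθ1 : θ' ≠ 1) (hA : 0 ≤ A)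
    (f : ℝ → ℝ)
    (hf : ∀ t ∈ Set.Icc (τ + 1) (2 * τ), f t ≤ A * (t - τ) ^ (-θ')) :
    ∫⁻ t in Set.Icc (τ + 1) (2 * τ), ENNReal.ofReal (f t)
      ≤ ENNReal.ofReal (A * ((τ ^ (1 - θ') - 1) / (1 - θ'))) := by
  have hle : τ + 1 ≤ 2 * τ := by linarith
  have hmeas : Measurable fun t : ℝ => ENNReal.ofReal (A * (t - τ) ^ (-θ')) := by
    fun_prop
  have step1 : ∫⁻ t in Set.Icc (τ + 1) (2 * τ), ENNReal.ofReal (f t)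
      ≤ ∫⁻ t in Set.Icc (τ + 1) (2 * τ), ENNReal.ofReal (A * (t - τ) ^ (-θ')) :=
    setLIntegral_mono hmeas fun t ht => ENNReal.ofReal_le_ofReal (hf t ht)
  have hcont : ContinuousOn (fun t : ℝ => A * (t - τ) ^ (-θ')) (Set.Icc (τ + 1) (2 * τ)) := by
    apply continuousOn_const.mul
    apply ContinuousOn.rpow_const (by fun_prop)
    intro t ht
    left
    intro h0
    nlinarith [ht.1]
  have hint : IntegrableOn (fun t : ℝ => A * (t - τ) ^ (-θ')) (Set.Icc (τ + 1) (2 * τ)) :=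
    hcont.integrableOn_Icc
  have hnn : 0 ≤ᵐ[volume.restrict (Set.Icc (τ + 1) (2 * τ))]
      fun t : ℝ => A * (t - τ) ^ (-θ') := by
    filter_upwards [ae_restrict_mem measurableSet_Icc] with t ht
    exact mul_nonneg hA (rpow_nonneg (by linarith [ht.1]) _)
  have step2 : ∫⁻ t in Set.Icc (τ + 1) (2 * τ), ENNReal.ofReal (A * (t - τ) ^ (-θ'))
      = ENNReal.ofReal (∫ t in Set.Icc (τ + 1) (2 * τ), A * (t - τ) ^ (-θ')) :=
    (ofReal_integral_eq_lintegral_ofReal hint hnn).symm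
  have hval : ∫ t in Set.Icc (τ + 1) (2 * τ), A * (t - τ) ^ (-θ')
      = A * ((τ ^ (1 - θ') - 1) / (1 - θ')) := by
    rw [MeasureTheory.integral_Icc_eq_integral_Ioc, ← intervalIntegral.integral_of_le hle,
      intervalIntegral.integral_const_mul]
    congr 1
    have := intervalIntegral.integral_comp_sub_right (a := τ + 1) (b := 2 * τ)
      (fun s => s ^ (-θ')) τ
    have h2 : 2 * τ - τ = τ := by ring
    have h3 : τ + 1 - τ = 1 := by ring
    rw [h2, h3] at this
    rw [this, integral_rpow]
    · rw [Real.one_rpow]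
      have : -θ' + 1 = 1 - θ' := by ring
      rw [this]
    · right
      constructor
      · intro h; apply hθ1; linarith [neg_eq_iff_eq_neg.mp h]
      · intro h0
        have := Set.mem_uIcc.mp h0
        rcases this with ⟨h1', h2'⟩ | ⟨h1', h2'⟩ <;> linarith
  calc _ ≤ _ := step1
    _ = _ := by rw [step2, hval]

lemma weight_bound (b τ t : ℝ) (hb : 0 ≤ b) (hτ : 0 < τ) (h : τ ≤ t) :
    (1 + t ^ 2) ^ (-b / 2) ≤ τ ^ (-b) := by
  have h1 : τ ^ 2 ≤ 1 + t ^ 2 := by nlinarith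
  calc (1 + t ^ 2) ^ (-b / 2) ≤ (τ ^ 2) ^ (-b / 2) :=
        Real.rpow_le_rpow_of_nonpos (by positivity) h1 (by linarith)
    _ = τ ^ (-b) := by
        rw [← Real.rpow_natCast τ 2, ← Real.rpow_mul hτ.le]
        congr 1
        push_cast
        ring

/-- The uniform bound on `K(τ)` from Step 2 of the proof of Proposition 4.1: for
`a ∈ (0,1]`, `δ > 0`, `p ∈ (1,∞)`, with `J(t) = t^{1-(a+δ)}` if `a+δ < 1`, `J(t) = log t`
if `a+δ = 1`, `J(t) = 1` if `a+δ > 1`, there is `C > 0` such that for all `τ ≥ 1`,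
`∫_{τ+1}^{2τ} ⟨t⟩^{-p(1-a)} J(t)^{p-1} (t-τ)^{-(a+δ)} dt ≤ C`. -/
theorem stmt5 (a δ p : ℝ) (ha0 : 0 < a) (ha1 : a ≤ 1) (hδ : 0 < δ) (hp : 1 < p) :
    ∃ C : ℝ, 0 < C ∧
      ∀ τ : ℝ, 1 ≤ τ →
        ∫⁻ t in Set.Icc (τ + 1) (2 * τ),
            ENNReal.ofReal ((1 + t ^ 2) ^ (-(p * (1 - a)) / 2) *
              (if a + δ < 1 then t ^ (1 - (a + δ))
                else if a + δ = 1 then Real.log t else 1) ^ (p - 1) *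
              (t - τ) ^ (-(a + δ)))
          ≤ ENNReal.ofReal C := by
  have hp1 : (0:ℝ) < p - 1 := by linarith
  have hpa : 0 ≤ p * (1 - a) := by nlinarith
  rcases lt_trichotomy (a + δ) 1 with hθ | hθ | hθ
  · -- case a + δ < 1
    have hq : 0 < 1 - (a + δ) := by linarith
    refine ⟨2 ^ ((1 - (a + δ)) * (p - 1)) / (1 - (a + δ)), by positivity, ?_⟩
    intro τ hτ
    have hτ0 : (0:ℝ) < τ := by linarith
    set A : ℝ := τ ^ (-(p * (1 - a))) * (2 * τ) ^ ((1 - (a + δ)) * (p - 1)) with hA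
    have hA0 : 0 ≤ A := by positivity
    have hf : ∀ t ∈ Set.Icc (τ + 1) (2 * τ),
        (1 + t ^ 2) ^ (-(p * (1 - a)) / 2) *
          (if a + δ < 1 then t ^ (1 - (a + δ))
            else if a + δ = 1 then Real.log t else 1) ^ (p - 1) *
          (t - τ) ^ (-(a + δ)) ≤ A * (t - τ) ^ (-(a + δ)) := by
      intro t ht
      have ht1 : τ + 1 ≤ t := ht.1
      have ht2 : t ≤ 2 * τ := ht.2
      have ht0 : (0:ℝ) < t := by linarith
      rw [if_pos hθ]
      have hX : (1 + t ^ 2) ^ (-(p * (1 - a)) / 2) ≤ τ ^ (-(p * (1 - a))) :=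
        weight_bound _ _ _ hpa hτ0 (by linarith)
      have hY : (t ^ (1 - (a + δ))) ^ (p - 1) ≤ (2 * τ) ^ ((1 - (a + δ)) * (p - 1)) := by
        rw [← Real.rpow_mul ht0.le]
        exact Real.rpow_le_rpow ht0.le ht2 (by positivity)
      have hZ : (0:ℝ) ≤ (t - τ) ^ (-(a + δ)) := rpow_nonneg (by linarith) _
      have hXY : (1 + t ^ 2) ^ (-(p * (1 - a)) / 2) * (t ^ (1 - (a + δ))) ^ (p - 1)
          ≤ A := by
        rw [hA]
        exact mul_le_mul hX hY (rpow_nonneg (rpow_nonneg ht0.le _) _) (by positivity)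
      exact mul_le_mul_of_nonneg_right hXY hZ
    refine (key_bound τ (a + δ) A hτ (ne_of_lt hθ) hA0 _ hf).trans
      (ENNReal.ofReal_le_ofReal ?_)
    have h1 : (τ ^ (1 - (a + δ)) - 1) / (1 - (a + δ)) ≤ τ ^ (1 - (a + δ)) / (1 - (a + δ)) := by
      gcongr <;> linarith
    have hpd : (0:ℝ) < p * δ := mul_pos (by linarith) hδ
    calc A * ((τ ^ (1 - (a + δ)) - 1) / (1 - (a + δ)))
        ≤ A * (τ ^ (1 - (a + δ)) / (1 - (a + δ))) := mul_le_mul_of_nonneg_left h1 hA0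
      _ = 2 ^ ((1 - (a + δ)) * (p - 1)) / (1 - (a + δ)) *
            (τ ^ (-(p * (1 - a))) * τ ^ ((1 - (a + δ)) * (p - 1)) * τ ^ (1 - (a + δ))) := by
          rw [hA, Real.mul_rpow (by norm_num) hτ0.le]; ring
      _ = 2 ^ ((1 - (a + δ)) * (p - 1)) / (1 - (a + δ)) *
            τ ^ (-(p * (1 - a)) + (1 - (a + δ)) * (p - 1) + (1 - (a + δ))) := by
          rw [← Real.rpow_add hτ0, ← Real.rpow_add hτ0]
      _ = 2 ^ ((1 - (a + δ)) * (p - 1)) / (1 - (a + δ)) * τ ^ (-(p * δ)) := by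
          rw [show -(p * (1 - a)) + (1 - (a + δ)) * (p - 1) + (1 - (a + δ)) = -(p * δ) by ring]
      _ ≤ 2 ^ ((1 - (a + δ)) * (p - 1)) / (1 - (a + δ)) * 1 := by
          apply mul_le_mul_of_nonneg_left _ (by positivity)
          exact Real.rpow_le_one_of_one_le_of_nonpos hτ (by linarith)
      _ = 2 ^ ((1 - (a + δ)) * (p - 1)) / (1 - (a + δ)) := mul_one _
  · -- case a + δ = 1
    have hda : δ = 1 - a := by linarith
    set ε : ℝ := p * δ / (2 * (p - 1)) with hεdef
    have hε0 : 0 < ε := by positivity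
    set m : ℝ := min (p * δ) 1 with hmdef
    have hm0 : 0 < m := lt_min (by positivity) one_pos
    have hm1 : m ≤ 1 := min_le_right _ _
    have hmpd : m ≤ p * δ := min_le_left _ _
    have hpd : (0:ℝ) < p * δ := by positivity
    refine ⟨(2:ℝ) ^ (p * δ / 2) / ε ^ (p - 1) * (4 / m), by positivity, ?_⟩
    intro τ hτ
    have hτ0 : (0:ℝ) < τ := by linarith
    set A : ℝ := τ ^ (-(p * (1 - a))) * ((2 * τ) ^ (p * δ / 2) / ε ^ (p - 1)) with hA
    have hA0 : 0 ≤ A := by positivity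
    have hθ'' : (1:ℝ) - m / 4 ≠ 1 := by intro h; nlinarith
    have hf : ∀ t ∈ Set.Icc (τ + 1) (2 * τ),
        (1 + t ^ 2) ^ (-(p * (1 - a)) / 2) *
          (if a + δ < 1 then t ^ (1 - (a + δ))
            else if a + δ = 1 then Real.log t else 1) ^ (p - 1) *
          (t - τ) ^ (-(a + δ)) ≤ A * (t - τ) ^ (-(1 - m / 4)) := by
      intro t ht
      have ht1 : τ + 1 ≤ t := ht.1
      have ht2 : t ≤ 2 * τ := ht.2
      have ht0 : (0:ℝ) < t := by linarith
      have htlog : 0 ≤ Real.log t := Real.log_nonneg (by linarith)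
      rw [if_neg (by linarith), if_pos hθ]
      have hX : (1 + t ^ 2) ^ (-(p * (1 - a)) / 2) ≤ τ ^ (-(p * (1 - a))) :=
        weight_bound _ _ _ hpa hτ0 (by linarith)
      have hY : (Real.log t) ^ (p - 1) ≤ (2 * τ) ^ (p * δ / 2) / ε ^ (p - 1) := by
        calc (Real.log t) ^ (p - 1) ≤ (t ^ ε / ε) ^ (p - 1) :=
              Real.rpow_le_rpow htlog (Real.log_le_rpow_div ht0.le hε0) (by linarith)
          _ = t ^ (ε * (p - 1)) / ε ^ (p - 1) := by
              rw [Real.div_rpow (rpow_nonneg ht0.le _) hε0.le, ← Real.rpow_mul ht0.le]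
          _ = t ^ (p * δ / 2) / ε ^ (p - 1) := by
              rw [show ε * (p - 1) = p * δ / 2 by rw [hεdef]; field_simp]
          _ ≤ (2 * τ) ^ (p * δ / 2) / ε ^ (p - 1) := by
              gcongr <;> linarith
      have hZ : (t - τ) ^ (-(a + δ)) ≤ (t - τ) ^ (-(1 - m / 4)) := by
        apply Real.rpow_le_rpow_of_exponent_le (by linarith)
        rw [hθ]; linarith
      have hZ0 : (0:ℝ) ≤ (t - τ) ^ (-(1 - m / 4)) := rpow_nonneg (by linarith) _
      have hXY : (1 + t ^ 2) ^ (-(p * (1 - a)) / 2) * (Real.log t) ^ (p - 1) ≤ A := by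
        rw [hA]
        exact mul_le_mul hX hY (rpow_nonneg htlog _) (by positivity)
      calc (1 + t ^ 2) ^ (-(p * (1 - a)) / 2) * (Real.log t) ^ (p - 1) * (t - τ) ^ (-(a + δ))
          ≤ A * (t - τ) ^ (-(a + δ)) := by
            apply mul_le_mul_of_nonneg_right hXY (rpow_nonneg (by linarith) _)
        _ ≤ A * (t - τ) ^ (-(1 - m / 4)) := mul_le_mul_of_nonneg_left hZ hA0
    refine (key_bound τ (1 - m / 4) A hτ hθ'' hA0 _ hf).trans
      (ENNReal.ofReal_le_ofReal ?_)
    have h1 : (τ ^ (1 - (1 - m / 4)) - 1) / (1 - (1 - m / 4))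
        ≤ τ ^ (1 - (1 - m / 4)) / (1 - (1 - m / 4)) := by
      gcongr <;> linarith
    calc A * ((τ ^ (1 - (1 - m / 4)) - 1) / (1 - (1 - m / 4)))
        ≤ A * (τ ^ (1 - (1 - m / 4)) / (1 - (1 - m / 4))) := mul_le_mul_of_nonneg_left h1 hA0
      _ = 2 ^ (p * δ / 2) / ε ^ (p - 1) * (4 / m) *
            (τ ^ (-(p * (1 - a))) * τ ^ (p * δ / 2) * τ ^ (1 - (1 - m / 4))) := by
          rw [hA, Real.mul_rpow (by norm_num) hτ0.le]
          rw [show (1:ℝ) - (1 - m / 4) = m / 4 by ring]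
          field_simp
      _ = 2 ^ (p * δ / 2) / ε ^ (p - 1) * (4 / m) *
            τ ^ (-(p * (1 - a)) + p * δ / 2 + (1 - (1 - m / 4))) := by
          rw [← Real.rpow_add hτ0, ← Real.rpow_add hτ0]
      _ ≤ 2 ^ (p * δ / 2) / ε ^ (p - 1) * (4 / m) * 1 := by
          apply mul_le_mul_of_nonneg_left _ (by positivity)
          apply Real.rpow_le_one_of_one_le_of_nonpos hτ
          rw [hda]
          nlinarith [hmpd]
      _ = 2 ^ (p * δ / 2) / ε ^ (p - 1) * (4 / m) := mul_one _
  · -- case a + δ > 1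
    have hq : 0 < a + δ - 1 := by linarith
    refine ⟨1 / (a + δ - 1), by positivity, ?_⟩
    intro τ hτ
    have hτ0 : (0:ℝ) < τ := by linarith
    have hf : ∀ t ∈ Set.Icc (τ + 1) (2 * τ),
        (1 + t ^ 2) ^ (-(p * (1 - a)) / 2) *
          (if a + δ < 1 then t ^ (1 - (a + δ))
            else if a + δ = 1 then Real.log t else 1) ^ (p - 1) *
          (t - τ) ^ (-(a + δ)) ≤ 1 * (t - τ) ^ (-(a + δ)) := by
      intro t ht
      have ht1 : τ + 1 ≤ t := ht.1
      rw [if_neg (by linarith), if_neg (by intro h; linarith), Real.one_rpow, mul_one, one_mul]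
      have hX : (1 + t ^ 2) ^ (-(p * (1 - a)) / 2) ≤ 1 :=
        Real.rpow_le_one_of_one_le_of_nonpos (by nlinarith) (by linarith)
      have htτ : (0:ℝ) ≤ t - τ := by linarith
      exact (mul_le_mul_of_nonneg_right hX (Real.rpow_nonneg htτ _)).trans
        (le_of_eq (one_mul _))
    refine (key_bound τ (a + δ) 1 hτ (by intro h; linarith) zero_le_one _ hf).trans
      (ENNReal.ofReal_le_ofReal ?_)
    rw [one_mul]
    have h0 : 0 ≤ τ ^ (1 - (a + δ)) := rpow_nonneg hτ0.le _
    rw [div_le_iff_of_neg (by linarith : (1:ℝ) - (a + δ) < 0)]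
    have : 1 / (a + δ - 1) * (1 - (a + δ)) = -1 := by field_simp; ring
    rw [this]
    linarith
end

section
/- Let a ∈ (0,1], δ > 0, and p ∈ (1,∞) with pδ > 1, and set ⟨t⟩ = √(1+t²). There exists a constant C > 0 such that for every measurable function g : (0,∞) → [0,∞], (∫_2^∞ ( ⟨t⟩^a ∫_0^{t/2} (t−τ)^{−(a+δ)} g(τ) dτ )^p dt)^{1/p} ≤ C (∫_0^∞ (⟨τ⟩ g(τ))^p dτ)^{1/p}. -/
open MeasureTheory
open scoped ENNReal

private lemma aux_real (a δ : ℝ) (ha0 : 0 < a) (ha1 : a ≤ 1) (hδ : 0 < δ)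
    {t τ : ℝ} (ht : 2 < t) (hτ1 : 0 < τ) (hτ2 : τ ≤ t / 2) :
    Real.sqrt (1 + t ^ 2) ^ a * (t - τ) ^ (-(a + δ)) ≤
      (2 * 2 ^ (a + δ)) * t ^ (-δ) := by
  have ht0 : (0:ℝ) < t := by linarith
  have h2 : Real.sqrt (1 + t ^ 2) ^ a ≤ 2 * t ^ a := by
    have h1 : Real.sqrt (1 + t ^ 2) ≤ 2 * t := by
      rw [show 2 * t = Real.sqrt ((2 * t) ^ 2) from (Real.sqrt_sq (by linarith)).symm]
      apply Real.sqrt_le_sqrt; nlinarith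
    calc Real.sqrt (1 + t ^ 2) ^ a ≤ (2 * t) ^ a :=
          Real.rpow_le_rpow (Real.sqrt_nonneg _) h1 ha0.le
      _ = 2 ^ a * t ^ a := Real.mul_rpow (by norm_num) ht0.le
      _ ≤ 2 * t ^ a := by
          have : (2:ℝ) ^ a ≤ 2 ^ (1:ℝ) :=
            Real.rpow_le_rpow_of_exponent_le (by norm_num) ha1
          rw [Real.rpow_one] at this
          exact mul_le_mul_of_nonneg_right this (Real.rpow_nonneg ht0.le a)
  have h3 : (t - τ) ^ (-(a + δ)) ≤ 2 ^ (a + δ) * t ^ (-(a + δ)) := by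
    have : (t - τ) ^ (-(a + δ)) ≤ (t / 2) ^ (-(a + δ)) :=
      Real.rpow_le_rpow_of_nonpos (by linarith) (by linarith) (by linarith)
    refine this.trans_eq ?_
    rw [Real.div_rpow ht0.le (by norm_num), Real.rpow_neg (by norm_num : (0:ℝ) ≤ 2),
      div_inv_eq_mul, mul_comm]
  calc Real.sqrt (1 + t ^ 2) ^ a * (t - τ) ^ (-(a + δ))
      ≤ (2 * t ^ a) * (2 ^ (a + δ) * t ^ (-(a + δ))) := by
        exact mul_le_mul h2 h3 (Real.rpow_nonneg (by linarith) _)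
          (by positivity)
    _ = (2 * 2 ^ (a + δ)) * (t ^ a * t ^ (-(a + δ))) := by ring
    _ = (2 * 2 ^ (a + δ)) * t ^ (-δ) := by
        rw [← Real.rpow_add ht0]; ring_nf


/-- Step 1 of the proof of Proposition 4.1, scalar form: for `a ∈ (0,1]`, `δ > 0`,
`p ∈ (1,∞)` with `pδ > 1`, there is `C > 0` such that for every measurable
`g : (0,∞) → [0,∞]`,
`(∫_2^∞ (⟨t⟩^a ∫_0^{t/2} (t-τ)^{-(a+δ)} g(τ) dτ)^p dt)^{1/p} ≤ C (∫_0^∞ (⟨τ⟩ g(τ))^p dτ)^{1/p}`,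
where `⟨t⟩ = √(1+t²)`. -/
theorem stmt6 (a δ p : ℝ) (ha0 : 0 < a) (ha1 : a ≤ 1) (hδ : 0 < δ) (hp : 1 < p)
    (hpδ : 1 < p * δ) :
    ∃ C : ℝ, 0 < C ∧
      ∀ g : ℝ → ℝ≥0∞, Measurable g →
        (∫⁻ t in Set.Ioi (2 : ℝ),
            (ENNReal.ofReal (Real.sqrt (1 + t ^ 2) ^ a) *
              ∫⁻ τ in Set.Ioc (0 : ℝ) (t / 2),
                ENNReal.ofReal ((t - τ) ^ (-(a + δ))) * g τ) ^ p) ^ (1 / p)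
          ≤ ENNReal.ofReal C *
            (∫⁻ τ in Set.Ioi (0 : ℝ),
              (ENNReal.ofReal (Real.sqrt (1 + τ ^ 2)) * g τ) ^ p) ^ (1 / p) := by
  set q : ℝ := p / (p - 1) with hq
  have hpq : p.HolderConjugate q := Real.HolderConjugate.conjExponent hp
  have hq1 : 1 < q := hpq.symm.lt
  -- weight finiteness K1
  set K1 : ℝ≥0∞ := ∫⁻ τ in Set.Ioi (0:ℝ),
      (ENNReal.ofReal (Real.sqrt (1 + τ ^ 2))⁻¹) ^ q with hK1
  have hK1fin : K1 ≠ ∞ := by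
    have hsub : Set.Ioi (0:ℝ) ⊆ Set.Ioc 0 1 ∪ Set.Ioi 1 := by
      intro x hx; rcases le_or_gt x 1 with h | h
      · exact Or.inl ⟨hx, h⟩
      · exact Or.inr h
    have hle : K1 ≤ (∫⁻ τ in Set.Ioc (0:ℝ) 1,
          (ENNReal.ofReal (Real.sqrt (1 + τ ^ 2))⁻¹) ^ q) +
        ∫⁻ τ in Set.Ioi (1:ℝ), (ENNReal.ofReal (Real.sqrt (1 + τ ^ 2))⁻¹) ^ q :=
      (lintegral_mono_set hsub).trans (lintegral_union_le _ _ _)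
    have h1 : (∫⁻ τ in Set.Ioc (0:ℝ) 1,
        (ENNReal.ofReal (Real.sqrt (1 + τ ^ 2))⁻¹) ^ q) ≤ 1 := by
      have : ∀ τ : ℝ, (ENNReal.ofReal (Real.sqrt (1 + τ ^ 2))⁻¹) ^ q ≤ 1 := by
        intro τ
        have h1' : (Real.sqrt (1 + τ ^ 2))⁻¹ ≤ 1 := by
          rw [inv_le_one_iff₀]; right
          have := Real.sqrt_le_sqrt (show (1:ℝ) ≤ 1 + τ ^ 2 by nlinarith)
          simpa using this
        calc (ENNReal.ofReal (Real.sqrt (1 + τ ^ 2))⁻¹) ^ q ≤ (1:ℝ≥0∞) ^ q := by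
              gcongr
              · exact ENNReal.ofReal_le_one.mpr h1'
          _ = 1 := ENNReal.one_rpow q
      calc (∫⁻ τ in Set.Ioc (0:ℝ) 1, (ENNReal.ofReal (Real.sqrt (1 + τ ^ 2))⁻¹) ^ q)
          ≤ ∫⁻ _ in Set.Ioc (0:ℝ) 1, 1 := lintegral_mono (fun τ => this τ)
        _ = 1 := by simp
    have h2 : (∫⁻ τ in Set.Ioi (1:ℝ), (ENNReal.ofReal (Real.sqrt (1 + τ ^ 2))⁻¹) ^ q) < ∞ := by
      have hint : IntegrableOn (fun τ : ℝ => τ ^ (-q)) (Set.Ioi 1) :=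
        integrableOn_Ioi_rpow_of_lt (by linarith) one_pos
      have hbound : ∀ τ ∈ Set.Ioi (1:ℝ),
          (ENNReal.ofReal (Real.sqrt (1 + τ ^ 2))⁻¹) ^ q ≤ ENNReal.ofReal (τ ^ (-q)) := by
        intro τ hτ
        have hτ1 : (1:ℝ) < τ := hτ
        have hτ0 : (0:ℝ) < τ := by linarith
        have hs : τ ≤ Real.sqrt (1 + τ ^ 2) := by
          have := Real.sqrt_le_sqrt (show τ ^ 2 ≤ 1 + τ ^ 2 by nlinarith)
          rwa [Real.sqrt_sq hτ0.le] at this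
        have hinv : (Real.sqrt (1 + τ ^ 2))⁻¹ ≤ τ⁻¹ := inv_anti₀ hτ0 hs
        calc (ENNReal.ofReal (Real.sqrt (1 + τ ^ 2))⁻¹) ^ q
            ≤ (ENNReal.ofReal τ⁻¹) ^ q := by gcongr
          _ = ENNReal.ofReal (τ⁻¹ ^ q) := ENNReal.ofReal_rpow_of_pos (by positivity)
          _ = ENNReal.ofReal (τ ^ (-q)) := by
              rw [Real.inv_rpow hτ0.le, ← Real.rpow_neg hτ0.le]
      calc (∫⁻ τ in Set.Ioi (1:ℝ), (ENNReal.ofReal (Real.sqrt (1 + τ ^ 2))⁻¹) ^ q)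
          ≤ ∫⁻ τ in Set.Ioi (1:ℝ), ENNReal.ofReal (τ ^ (-q)) :=
            setLIntegral_mono' measurableSet_Ioi hbound
        _ < ∞ := hint.lintegral_lt_top
    exact ((hle.trans_lt (by exact ENNReal.add_lt_top.mpr ⟨h1.trans_lt ENNReal.one_lt_top, h2⟩))).ne
  set K2 : ℝ≥0∞ := ∫⁻ t in Set.Ioi (2:ℝ), ENNReal.ofReal (t ^ (-(δ * p))) with hK2
  have hK2fin : K2 ≠ ∞ := by
    have hint : IntegrableOn (fun t : ℝ => t ^ (-(δ * p))) (Set.Ioi 2) :=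
      integrableOn_Ioi_rpow_of_lt (by nlinarith) two_pos
    exact hint.lintegral_lt_top.ne
  set c0 : ℝ := 2 * 2 ^ (a + δ) with hc0
  have hc0pos : 0 < c0 := by positivity
  set D : ℝ≥0∞ := ENNReal.ofReal c0 * K2 ^ (1 / p) * K1 ^ (1 / q) with hD
  have hp0 : (0:ℝ) < p := by linarith
  have hDfin : D ≠ ∞ :=
    ENNReal.mul_ne_top
      (ENNReal.mul_ne_top ENNReal.ofReal_ne_top
        (ENNReal.rpow_ne_top_of_nonneg (by positivity) hK2fin))
      (ENNReal.rpow_ne_top_of_nonneg (by positivity) hK1fin)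
  refine ⟨D.toReal + 1, by positivity, ?_⟩
  intro g hg
  set A := ∫⁻ τ in Set.Ioi (0:ℝ), (ENNReal.ofReal (Real.sqrt (1 + τ ^ 2)) * g τ) ^ p with hA
  set G := ∫⁻ τ in Set.Ioi (0:ℝ), g τ with hG
  have hmeasW : Measurable fun τ : ℝ => ENNReal.ofReal (Real.sqrt (1 + τ ^ 2)) := by
    fun_prop
  have hGle : G ≤ A ^ (1 / p) * K1 ^ (1 / q) := by
    have heq : G = ∫⁻ τ in Set.Ioi (0:ℝ),
        (ENNReal.ofReal (Real.sqrt (1 + τ ^ 2)) * g τ) *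
          ENNReal.ofReal (Real.sqrt (1 + τ ^ 2))⁻¹ := by
      refine lintegral_congr fun τ => ?_
      have h0 : 0 < Real.sqrt (1 + τ ^ 2) := Real.sqrt_pos.mpr (by positivity)
      rw [mul_right_comm, ← ENNReal.ofReal_mul h0.le, mul_inv_cancel₀ h0.ne',
        ENNReal.ofReal_one, one_mul]
    rw [heq]
    exact ENNReal.lintegral_mul_le_Lp_mul_Lq _ hpq
      ((hmeasW.mul hg).aemeasurable)
      ((ENNReal.measurable_ofReal.comp (by fun_prop)).aemeasurable)
  have key : ∀ t ∈ Set.Ioi (2:ℝ),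
      ENNReal.ofReal (Real.sqrt (1 + t ^ 2) ^ a) *
        (∫⁻ τ in Set.Ioc (0:ℝ) (t / 2), ENNReal.ofReal ((t - τ) ^ (-(a + δ))) * g τ)
      ≤ ENNReal.ofReal c0 * ENNReal.ofReal (t ^ (-δ)) * G := by
    intro t ht
    have ht2 : (2:ℝ) < t := ht
    calc ENNReal.ofReal (Real.sqrt (1 + t ^ 2) ^ a) *
          (∫⁻ τ in Set.Ioc (0:ℝ) (t / 2), ENNReal.ofReal ((t - τ) ^ (-(a + δ))) * g τ)
        = ∫⁻ τ in Set.Ioc (0:ℝ) (t / 2),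
            ENNReal.ofReal (Real.sqrt (1 + t ^ 2) ^ a) *
              (ENNReal.ofReal ((t - τ) ^ (-(a + δ))) * g τ) :=
          (lintegral_const_mul' _ _ ENNReal.ofReal_ne_top).symm
      _ ≤ ∫⁻ τ in Set.Ioc (0:ℝ) (t / 2),
            (ENNReal.ofReal c0 * ENNReal.ofReal (t ^ (-δ))) * g τ := by
          refine setLIntegral_mono' measurableSet_Ioc fun τ hτ => ?_
          rw [← mul_assoc, ← ENNReal.ofReal_mul (by positivity),
            ← ENNReal.ofReal_mul hc0pos.le]
          exact mul_le_mul_left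
            (ENNReal.ofReal_le_ofReal (aux_real a δ ha0 ha1 hδ ht2 hτ.1 hτ.2)) _
      _ = (ENNReal.ofReal c0 * ENNReal.ofReal (t ^ (-δ))) *
            ∫⁻ τ in Set.Ioc (0:ℝ) (t / 2), g τ :=
          lintegral_const_mul' _ _ (by finiteness)
      _ ≤ ENNReal.ofReal c0 * ENNReal.ofReal (t ^ (-δ)) * G := by
          gcongr
          exact lintegral_mono_set Set.Ioc_subset_Ioi_self
  calc (∫⁻ t in Set.Ioi (2:ℝ),
          (ENNReal.ofReal (Real.sqrt (1 + t ^ 2) ^ a) *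
            ∫⁻ τ in Set.Ioc (0:ℝ) (t / 2),
              ENNReal.ofReal ((t - τ) ^ (-(a + δ))) * g τ) ^ p) ^ (1 / p)
      ≤ (∫⁻ t in Set.Ioi (2:ℝ),
          (ENNReal.ofReal c0 * ENNReal.ofReal (t ^ (-δ)) * G) ^ p) ^ (1 / p) := by
        apply ENNReal.rpow_le_rpow _ (by positivity)
        refine setLIntegral_mono' measurableSet_Ioi fun t ht => ?_
        exact ENNReal.rpow_le_rpow (key t ht) hp0.le
    _ = (∫⁻ t in Set.Ioi (2:ℝ),
          ENNReal.ofReal (t ^ (-(δ * p))) * (ENNReal.ofReal c0 * G) ^ p) ^ (1 / p) := by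
        congr 1
        refine setLIntegral_congr_fun measurableSet_Ioi (
          fun t ht => ?_)
        have ht0 : (0:ℝ) < t := by have : (2:ℝ) < t := ht; linarith
        rw [mul_right_comm, ENNReal.mul_rpow_of_nonneg _ _ hp0.le,
          ENNReal.ofReal_rpow_of_pos (Real.rpow_pos_of_pos ht0 _),
          ← Real.rpow_mul ht0.le, neg_mul, mul_comm]
    _ = (K2 * (ENNReal.ofReal c0 * G) ^ p) ^ (1 / p) := by
        have hm : Measurable fun t : ℝ => ENNReal.ofReal (t ^ (-(δ * p))) :=
          (measurable_id'.pow_const _).ennreal_ofReal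
        rw [lintegral_mul_const _ hm, mul_comm]
    _ = K2 ^ (1 / p) * (ENNReal.ofReal c0 * G) := by
        rw [ENNReal.mul_rpow_of_nonneg _ _ (by positivity), ← ENNReal.rpow_mul,
          mul_one_div, div_self hp0.ne', ENNReal.rpow_one]
    _ ≤ K2 ^ (1 / p) * (ENNReal.ofReal c0 * (A ^ (1 / p) * K1 ^ (1 / q))) := by
        gcongr
    _ = D * A ^ (1 / p) := by rw [hD]; ring
    _ ≤ ENNReal.ofReal (D.toReal + 1) * A ^ (1 / p) := by
        gcongr
        calc D = ENNReal.ofReal D.toReal := (ENNReal.ofReal_toReal hDfin).symm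
          _ ≤ ENNReal.ofReal (D.toReal + 1) :=
              ENNReal.ofReal_le_ofReal (by linarith)
end

section
/- Let a ∈ (0,1], δ > 0, and p ∈ (1,∞), and set ⟨t⟩ = √(1+t²). There exists a constant C > 0 such that for every measurable function g : (0,∞) → [0,∞], (∫_2^∞ ( ⟨t⟩^a ∫_{t/2}^{t−1} (t−τ)^{−(a+δ)} g(τ) dτ )^p dt)^{1/p} ≤ C (∫_0^∞ (⟨τ⟩ g(τ))^p dτ)^{1/p}. -/
open MeasureTheory
open scoped ENNReal

set_option maxHeartbeats 1000000

namespace Stmt7Aux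
open Set

lemma mp_refl (t : ℝ) : MeasurePreserving (fun τ : ℝ => t - τ) volume volume := by
  have h1 : MeasurePreserving (fun τ : ℝ => -τ) (volume : Measure ℝ) volume :=
    Measure.measurePreserving_neg volume
  have h2 : MeasurePreserving (fun τ : ℝ => τ + t) (volume : Measure ℝ) volume :=
    measurePreserving_add_right volume t
  convert h2.comp h1 using 1
  funext τ; show t - τ = -τ + t; ring

lemma lint_refl (t c : ℝ) (f : ℝ → ℝ≥0∞) :
    ∫⁻ τ in Iic (t - c), f (t - τ) = ∫⁻ s in Ici c, f s := by
  have h := (mp_refl t).setLIntegral_comp_preimage_emb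
    ((Homeomorph.subLeft t).measurableEmbedding) f (Ici c)
  have hpre : (fun τ : ℝ => t - τ) ⁻¹' (Ici c) = Iic (t - c) := by
    ext τ; simp [le_sub_comm]
  rwa [hpre] at h

lemma lint_shift (τ c : ℝ) (f : ℝ → ℝ≥0∞) :
    ∫⁻ t in Ioi (c + τ), f (t - τ) = ∫⁻ s in Ioi c, f s := by
  have h := (measurePreserving_sub_right volume τ).setLIntegral_comp_preimage_emb
    ((Homeomorph.subRight τ).measurableEmbedding) f (Ioi c)
  have hpre : (fun t : ℝ => t - τ) ⁻¹' (Ioi c) = Ioi (c + τ) := by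
    ext t; simp [lt_sub_iff_add_lt]
  rwa [hpre] at h

lemma base_integral {δ : ℝ} (hδ : 0 < δ) :
    ∫⁻ s in Ioi (1:ℝ), ENNReal.ofReal (s ^ (-1 - δ)) = ENNReal.ofReal δ⁻¹ := by
  rw [← ofReal_integral_eq_lintegral_ofReal
      (integrableOn_Ioi_rpow_of_lt (by linarith) one_pos)
      ((ae_restrict_iff' measurableSet_Ioi).2 (ae_of_all _ fun s hs =>
        Real.rpow_nonneg (zero_le_one.trans hs.le) _))]
  rw [integral_Ioi_rpow_of_lt (by linarith) one_pos]
  rw [Real.one_rpow, show (-1:ℝ) - δ + 1 = -δ by ring, neg_div_neg_eq, one_div]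

lemma base_integral_Ici {δ : ℝ} (hδ : 0 < δ) :
    ∫⁻ s in Ici (1:ℝ), ENNReal.ofReal (s ^ (-1 - δ)) = ENNReal.ofReal δ⁻¹ := by
  rw [← base_integral hδ]
  exact (setLIntegral_congr (Ioi_ae_eq_Ici (a := (1:ℝ)))).symm

lemma key {a δ t τ : ℝ} (ha0 : 0 < a) (ha1 : a ≤ 1) (ht : 2 < t)
    (h1 : t / 2 ≤ τ) (h2 : τ ≤ t - 1) :
    Real.sqrt (1 + t ^ 2) ^ a * ((t - τ) ^ (-(a + δ)) * (Real.sqrt (1 + τ ^ 2))⁻¹)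
      ≤ (2 * Real.sqrt 2) ^ a * (t - τ) ^ (-1 - δ) := by
  have ht0 : (0:ℝ) < t := by linarith
  have hτ1 : (1:ℝ) < τ := by linarith
  have hτ0 : (0:ℝ) < τ := by linarith
  have hs1 : (1:ℝ) ≤ t - τ := by linarith
  have hs0 : (0:ℝ) < t - τ := by linarith
  have hsτ : t - τ ≤ τ := by linarith
  have hsq2 : (0:ℝ) ≤ Real.sqrt 2 := Real.sqrt_nonneg 2
  -- √(1+t²) ≤ √2 * (2τ)
  have hsqt : Real.sqrt (1 + t ^ 2) ≤ 2 * Real.sqrt 2 * τ := by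
    have e1 : Real.sqrt (1 + t ^ 2) ≤ Real.sqrt (2 * t ^ 2) :=
      Real.sqrt_le_sqrt (by nlinarith)
    have e2 : Real.sqrt (2 * t ^ 2) = Real.sqrt 2 * t := by
      rw [Real.sqrt_mul (by norm_num), Real.sqrt_sq ht0.le]
    have e3 : Real.sqrt 2 * t ≤ Real.sqrt 2 * (2 * τ) :=
      mul_le_mul_of_nonneg_left (by linarith) hsq2
    calc Real.sqrt (1 + t ^ 2) ≤ Real.sqrt 2 * t := by rw [← e2]; exact e1
      _ ≤ Real.sqrt 2 * (2 * τ) := e3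
      _ = 2 * Real.sqrt 2 * τ := by ring
  have hsqτ : τ ≤ Real.sqrt (1 + τ ^ 2) := by
    have : τ = Real.sqrt (τ ^ 2) := (Real.sqrt_sq hτ0.le).symm
    rw [this]
    exact Real.sqrt_le_sqrt (by nlinarith)
  have hsqτ0 : (0:ℝ) < Real.sqrt (1 + τ ^ 2) := Real.sqrt_pos.2 (by positivity)
  have hinv : (Real.sqrt (1 + τ ^ 2))⁻¹ ≤ τ⁻¹ := by
    exact inv_anti₀ hτ0 hsqτ
  have hM0 : (0:ℝ) < 2 * Real.sqrt 2 := by positivity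
  -- step 1
  have step1 : Real.sqrt (1 + t ^ 2) ^ a ≤ (2 * Real.sqrt 2) ^ a * τ ^ a := by
    calc Real.sqrt (1 + t ^ 2) ^ a ≤ (2 * Real.sqrt 2 * τ) ^ a :=
          Real.rpow_le_rpow (Real.sqrt_nonneg _) hsqt ha0.le
      _ = (2 * Real.sqrt 2) ^ a * τ ^ a := Real.mul_rpow hM0.le hτ0.le
  have hrp_nonneg : (0:ℝ) ≤ (t - τ) ^ (-(a + δ)) := Real.rpow_nonneg hs0.le _
  have step2 : (t - τ) ^ (-(a + δ)) * (Real.sqrt (1 + τ ^ 2))⁻¹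
      ≤ (t - τ) ^ (-(a + δ)) * τ⁻¹ :=
    mul_le_mul_of_nonneg_left hinv hrp_nonneg
  have main : Real.sqrt (1 + t ^ 2) ^ a * ((t - τ) ^ (-(a + δ)) * (Real.sqrt (1 + τ ^ 2))⁻¹)
      ≤ (2 * Real.sqrt 2) ^ a * τ ^ a * ((t - τ) ^ (-(a + δ)) * τ⁻¹) := by
    apply mul_le_mul step1 step2 (by positivity) (by positivity)
  refine main.trans ?_
  -- τ^a * τ⁻¹ = τ^(a-1) ≤ (t-τ)^(a-1)
  have e4 : τ ^ a * τ⁻¹ = τ ^ (a - 1) := by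
    rw [← Real.rpow_neg_one τ, ← Real.rpow_add hτ0, ← sub_eq_add_neg]
  have e5 : τ ^ (a - 1) ≤ (t - τ) ^ (a - 1) :=
    Real.rpow_le_rpow_of_nonpos hs0 hsτ (by linarith)
  have e6 : (t - τ) ^ (a - 1) * (t - τ) ^ (-(a + δ)) = (t - τ) ^ (-1 - δ) := by
    rw [← Real.rpow_add hs0]
    congr 1; ring
  calc (2 * Real.sqrt 2) ^ a * τ ^ a * ((t - τ) ^ (-(a + δ)) * τ⁻¹)
      = (2 * Real.sqrt 2) ^ a * (τ ^ a * τ⁻¹ * (t - τ) ^ (-(a + δ))) := by ring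
    _ = (2 * Real.sqrt 2) ^ a * (τ ^ (a - 1) * (t - τ) ^ (-(a + δ))) := by rw [e4]
    _ ≤ (2 * Real.sqrt 2) ^ a * ((t - τ) ^ (a - 1) * (t - τ) ^ (-(a + δ))) := by
        apply mul_le_mul_of_nonneg_left _ (by positivity)
        exact mul_le_mul_of_nonneg_right e5 hrp_nonneg
    _ = (2 * Real.sqrt 2) ^ a * (t - τ) ^ (-1 - δ) := by rw [e6]

end Stmt7Aux

open Set Stmt7Aux

/-- Step 2 of the proof of Proposition 4.1, scalar form: for `a ∈ (0,1]`, `δ > 0`,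
`p ∈ (1,∞)`, there is `C > 0` such that for every measurable `g : (0,∞) → [0,∞]`,
`(∫_2^∞ (⟨t⟩^a ∫_{t/2}^{t-1} (t-τ)^{-(a+δ)} g(τ) dτ)^p dt)^{1/p}
  ≤ C (∫_0^∞ (⟨τ⟩ g(τ))^p dτ)^{1/p}`, where `⟨t⟩ = √(1+t²)`. -/
theorem stmt7 (a δ p : ℝ) (ha0 : 0 < a) (ha1 : a ≤ 1) (hδ : 0 < δ) (hp : 1 < p) :
    ∃ C : ℝ, 0 < C ∧
      ∀ g : ℝ → ℝ≥0∞, Measurable g →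
        (∫⁻ t in Set.Ioi (2 : ℝ),
            (ENNReal.ofReal (Real.sqrt (1 + t ^ 2) ^ a) *
              ∫⁻ τ in Set.Icc (t / 2) (t - 1),
                ENNReal.ofReal ((t - τ) ^ (-(a + δ))) * g τ) ^ p) ^ (1 / p)
          ≤ ENNReal.ofReal C *
            (∫⁻ τ in Set.Ioi (0 : ℝ),
              (ENNReal.ofReal (Real.sqrt (1 + τ ^ 2)) * g τ) ^ p) ^ (1 / p) := by
  have hM0 : (0:ℝ) < (2 * Real.sqrt 2) ^ a := Real.rpow_pos_of_pos (by positivity) a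
  refine ⟨(2 * Real.sqrt 2) ^ a * δ⁻¹, by positivity, ?_⟩
  intro g hg
  set q : ℝ := p / (p - 1) with hq_def
  have hpq : p.HolderConjugate q := Real.HolderConjugate.conjExponent hp
  have hp0 : (0:ℝ) < p := by linarith
  have hq0 : (0:ℝ) < q := hpq.symm.pos
  have hpq1 : 1 / p + 1 / q = 1 := by
    have := hpq.inv_add_inv_eq_one
    simpa [one_div] using this
  set K : ℝ≥0∞ := ENNReal.ofReal ((2 * Real.sqrt 2) ^ a * δ⁻¹) with hK_def
  have hKtop : K ≠ ⊤ := ENNReal.ofReal_ne_top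
  set k : ℝ → ℝ → ℝ≥0∞ := fun t τ => ENNReal.ofReal
    (Real.sqrt (1 + t ^ 2) ^ a * ((t - τ) ^ (-(a + δ)) * (Real.sqrt (1 + τ ^ 2))⁻¹)) with hk_def
  set h : ℝ → ℝ≥0∞ := fun τ => ENNReal.ofReal (Real.sqrt (1 + τ ^ 2)) * g τ with hh_def
  -- measurability
  have mτ : Measurable fun τ : ℝ => Real.sqrt (1 + τ ^ 2) :=
    (Real.continuous_sqrt.comp (continuous_const.add (continuous_pow 2))).measurable
  have hh_meas : Measurable h := by
    rw [hh_def]; exact (ENNReal.measurable_ofReal.comp mτ).mul hg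
  have hkm : Measurable fun x : ℝ × ℝ => k x.1 x.2 := by
    simp only [hk_def]
    exact ENNReal.measurable_ofReal.comp
      ((((mτ.comp measurable_fst).pow measurable_const)).mul
        ((((measurable_fst.sub measurable_snd).pow measurable_const)).mul
          ((mτ.comp measurable_snd).inv)))
  set E : Set (ℝ × ℝ) := {x | 2 < x.1 ∧ x.1 / 2 ≤ x.2 ∧ x.2 ≤ x.1 - 1} with hE_def
  have hE : MeasurableSet E := by
    have hEeq : E = {x : ℝ × ℝ | 2 < x.1} ∩ ({x | x.1 / 2 ≤ x.2} ∩ {x | x.2 ≤ x.1 - 1}) := by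
      ext x
      simp only [hE_def, mem_setOf_eq, mem_inter_iff]
    rw [hEeq]
    exact (measurableSet_lt measurable_const measurable_fst).inter
      ((measurableSet_le (measurable_fst.div_const 2) measurable_snd).inter
        (measurableSet_le measurable_snd (measurable_fst.sub measurable_const)))
  set Φ : ℝ × ℝ → ℝ≥0∞ := fun x => k x.1 x.2 * h x.2 ^ p with hΦ_def
  have hΦm : Measurable Φ := by
    rw [hΦ_def]
    exact hkm.mul ((hh_meas.comp measurable_snd).pow measurable_const)
  have hkey : ∀ t τ : ℝ, 2 < t → t / 2 ≤ τ → τ ≤ t - 1 →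
      k t τ ≤ ENNReal.ofReal ((2 * Real.sqrt 2) ^ a) * ENNReal.ofReal ((t - τ) ^ (-1 - δ)) := by
    intro t τ ht h1 h2
    rw [hk_def, ← ENNReal.ofReal_mul hM0.le]
    exact ENNReal.ofReal_le_ofReal (key ha0 ha1 ht h1 h2)
  -- Schur bound A
  have hA : ∀ t : ℝ, 2 < t → (∫⁻ τ in Icc (t/2) (t-1), k t τ) ≤ K := by
    intro t ht
    have step : (∫⁻ τ in Icc (t/2) (t-1), k t τ)
        ≤ ∫⁻ τ in Icc (t/2) (t-1),
            ENNReal.ofReal ((2 * Real.sqrt 2) ^ a) * ENNReal.ofReal ((t - τ) ^ (-1 - δ)) := by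
      refine lintegral_mono_ae ((ae_restrict_iff' measurableSet_Icc).2 (ae_of_all _ ?_))
      intro τ hτ
      exact hkey t τ ht hτ.1 hτ.2
    refine step.trans ?_
    refine (lintegral_mono_set Icc_subset_Iic_self).trans ?_
    rw [lintegral_const_mul' _ _ ENNReal.ofReal_ne_top,
      lint_refl t 1 (fun s => ENNReal.ofReal (s ^ (-1 - δ))), base_integral_Ici hδ,
      ← ENNReal.ofReal_mul hM0.le, hK_def]
  -- Schur bound B
  have hB : ∀ τ : ℝ, 1 < τ → (∫⁻ t, E.indicator (fun x => k x.1 x.2) (t, τ)) ≤ K := by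
    intro τ hτ
    have pt : ∀ t : ℝ, E.indicator (fun x => k x.1 x.2) (t, τ)
        ≤ (Ici (τ+1)).indicator
            (fun t => ENNReal.ofReal ((2 * Real.sqrt 2) ^ a) *
              ENNReal.ofReal ((t - τ) ^ (-1 - δ))) t := by
      intro t
      by_cases hmem : (t, τ) ∈ E
      · have hm := hmem
        simp only [hE_def, mem_setOf_eq] at hm
        obtain ⟨ht2, hh1, hh2⟩ := hm
        rw [Set.indicator_of_mem hmem, Set.indicator_of_mem
          (show t ∈ Ici (τ+1) by simp only [mem_Ici]; linarith)]
        exact hkey t τ ht2 hh1 hh2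
      · rw [Set.indicator_of_notMem hmem]; exact zero_le
    calc (∫⁻ t, E.indicator (fun x => k x.1 x.2) (t, τ))
        ≤ ∫⁻ t, (Ici (τ+1)).indicator
            (fun t => ENNReal.ofReal ((2 * Real.sqrt 2) ^ a) *
              ENNReal.ofReal ((t - τ) ^ (-1 - δ))) t := lintegral_mono pt
      _ = ∫⁻ t in Ici (τ+1), ENNReal.ofReal ((2 * Real.sqrt 2) ^ a) *
              ENNReal.ofReal ((t - τ) ^ (-1 - δ)) := lintegral_indicator measurableSet_Ici _
      _ = ∫⁻ t in Ioi (τ+1), ENNReal.ofReal ((2 * Real.sqrt 2) ^ a) *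
              ENNReal.ofReal ((t - τ) ^ (-1 - δ)) := (setLIntegral_congr (Ioi_ae_eq_Ici)).symm
      _ = K := by
          rw [lintegral_const_mul' _ _ ENNReal.ofReal_ne_top,
            show τ + 1 = 1 + τ by ring,
            lint_shift τ 1 (fun s => ENNReal.ofReal (s ^ (-1 - δ))), base_integral hδ,
            ← ENNReal.ofReal_mul hM0.le, hK_def]
  -- conversion of the inner integral
  have hg_inner : ∀ t : ℝ, Measurable fun τ => ENNReal.ofReal ((t - τ) ^ (-(a + δ))) * g τ :=
    fun t => (ENNReal.measurable_ofReal.comp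
      ((measurable_const.sub measurable_id).pow measurable_const)).mul hg
  have hconv : ∀ t : ℝ, 2 < t →
      ENNReal.ofReal (Real.sqrt (1 + t ^ 2) ^ a) *
          (∫⁻ τ in Icc (t / 2) (t - 1), ENNReal.ofReal ((t - τ) ^ (-(a + δ))) * g τ)
        = ∫⁻ τ in Icc (t / 2) (t - 1), k t τ * h τ := by
    intro t ht
    rw [← lintegral_const_mul _ (hg_inner t)]
    refine setLIntegral_congr_fun measurableSet_Icc ?_
    intro τ hτ
    have hτ0 : (0:ℝ) < τ := by have := hτ.1; linarith
    have hs0 : (0:ℝ) < t - τ := by have := hτ.2; linarith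
    have hsq0 : (0:ℝ) < Real.sqrt (1 + τ ^ 2) := Real.sqrt_pos.2 (by positivity)
    simp only [hk_def, hh_def]
    rw [ENNReal.ofReal_mul (by positivity), ENNReal.ofReal_mul (Real.rpow_nonneg hs0.le _)]
    have hone : ENNReal.ofReal ((Real.sqrt (1 + τ ^ 2))⁻¹) *
        ENNReal.ofReal (Real.sqrt (1 + τ ^ 2)) = 1 := by
      rw [← ENNReal.ofReal_mul (by positivity), inv_mul_cancel₀ hsq0.ne', ENNReal.ofReal_one]
    set u := ENNReal.ofReal (Real.sqrt (1 + t ^ 2) ^ a)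
    set v := ENNReal.ofReal ((t - τ) ^ (-(a + δ)))
    set w := ENNReal.ofReal ((Real.sqrt (1 + τ ^ 2))⁻¹)
    set d := ENNReal.ofReal (Real.sqrt (1 + τ ^ 2))
    symm
    calc u * (v * w) * (d * g τ) = u * (v * g τ) * (w * d) := by ring
      _ = u * (v * g τ) := by rw [hone, mul_one]
  -- Hölder
  have hH : ∀ t : ℝ, 2 < t →
      (∫⁻ τ in Icc (t/2) (t-1), k t τ * h τ) ^ p
        ≤ K ^ (p/q) * ∫⁻ τ in Icc (t/2) (t-1), k t τ * h τ ^ p := by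
    intro t ht
    have hmk : Measurable fun τ => k t τ := by
      simp only [hk_def]
      exact ENNReal.measurable_ofReal.comp (measurable_const.mul
        ((((measurable_const.sub measurable_id).pow measurable_const)).mul (mτ.inv)))
    have hold := ENNReal.lintegral_mul_le_Lp_mul_Lq (volume.restrict (Icc (t/2) (t-1))) hpq.symm
      (f := fun τ => (k t τ) ^ (1/q)) (g := fun τ => (k t τ) ^ (1/p) * h τ)
      ((hmk.pow measurable_const).aemeasurable)
      (((hmk.pow measurable_const).mul hh_meas).aemeasurable)
    have heq1 : ∀ τ : ℝ, ((k t τ) ^ (1/q)) * ((k t τ) ^ (1/p) * h τ) = k t τ * h τ := by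
      intro τ
      rw [← mul_assoc, ← ENNReal.rpow_add_of_nonneg _ _
        (one_div_nonneg.mpr hq0.le) (one_div_nonneg.mpr hp0.le),
        show 1/q + 1/p = 1 by linarith [hpq1], ENNReal.rpow_one]
    have heq2 : ∀ τ : ℝ, ((k t τ) ^ (1/q)) ^ q = k t τ := by
      intro τ
      rw [← ENNReal.rpow_mul, one_div, inv_mul_cancel₀ hq0.ne', ENNReal.rpow_one]
    have heq3 : ∀ τ : ℝ, ((k t τ) ^ (1/p) * h τ) ^ p = k t τ * h τ ^ p := by
      intro τ
      rw [ENNReal.mul_rpow_of_nonneg _ _ hp0.le, ← ENNReal.rpow_mul, one_div,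
        inv_mul_cancel₀ hp0.ne', ENNReal.rpow_one]
    calc (∫⁻ τ in Icc (t/2) (t-1), k t τ * h τ) ^ p
        = (∫⁻ τ in Icc (t/2) (t-1),
            ((fun τ => (k t τ) ^ (1/q)) * fun τ => (k t τ) ^ (1/p) * h τ) τ) ^ p := by
          congr 1; exact lintegral_congr fun τ => (heq1 τ).symm
      _ ≤ ((∫⁻ τ in Icc (t/2) (t-1), ((k t τ) ^ (1/q)) ^ q) ^ (1/q) *
            (∫⁻ τ in Icc (t/2) (t-1), ((k t τ) ^ (1/p) * h τ) ^ p) ^ (1/p)) ^ p :=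
          ENNReal.rpow_le_rpow hold hp0.le
      _ = ((∫⁻ τ in Icc (t/2) (t-1), k t τ) ^ (1/q) *
            (∫⁻ τ in Icc (t/2) (t-1), k t τ * h τ ^ p) ^ (1/p)) ^ p := by
          rw [lintegral_congr heq2, lintegral_congr heq3]
      _ ≤ (K ^ (1/q) * (∫⁻ τ in Icc (t/2) (t-1), k t τ * h τ ^ p) ^ (1/p)) ^ p := by
          refine ENNReal.rpow_le_rpow ?_ hp0.le
          exact mul_le_mul_left
            (ENNReal.rpow_le_rpow (hA t ht) (one_div_nonneg.mpr hq0.le)) _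
      _ = K ^ (p/q) * ∫⁻ τ in Icc (t/2) (t-1), k t τ * h τ ^ p := by
          rw [ENNReal.mul_rpow_of_nonneg _ _ hp0.le, ← ENNReal.rpow_mul, ← ENNReal.rpow_mul,
            show 1/q * p = p/q by ring, one_div, inv_mul_cancel₀ hp0.ne', ENNReal.rpow_one]
  -- main chain
  have main1 : (∫⁻ t in Ioi (2:ℝ), (ENNReal.ofReal (Real.sqrt (1 + t ^ 2) ^ a) *
        ∫⁻ τ in Icc (t / 2) (t - 1), ENNReal.ofReal ((t - τ) ^ (-(a + δ))) * g τ) ^ p)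
      ≤ K ^ (p/q) * ∫⁻ t in Ioi (2:ℝ), ∫⁻ τ in Icc (t/2) (t-1), k t τ * h τ ^ p := by
    rw [← lintegral_const_mul' _ _
      (ENNReal.rpow_ne_top_of_nonneg (div_nonneg hp0.le hq0.le) hKtop)]
    refine lintegral_mono_ae ((ae_restrict_iff' measurableSet_Ioi).2 (ae_of_all _ ?_))
    intro t ht
    rw [hconv t ht]
    exact hH t ht
  have main2 : (∫⁻ t in Ioi (2:ℝ), ∫⁻ τ in Icc (t/2) (t-1), k t τ * h τ ^ p)
      ≤ K * ∫⁻ τ in Ioi (0:ℝ), h τ ^ p := by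
    have swap_meas : Measurable (Function.uncurry fun t τ : ℝ => E.indicator Φ (t, τ)) :=
      (hΦm.indicator hE).comp (measurable_fst.prodMk measurable_snd)
    calc (∫⁻ t in Ioi (2:ℝ), ∫⁻ τ in Icc (t/2) (t-1), k t τ * h τ ^ p)
        = ∫⁻ t in Ioi (2:ℝ), ∫⁻ τ, E.indicator Φ (t, τ) := by
          refine setLIntegral_congr_fun measurableSet_Ioi ?_
          intro t ht
          dsimp only
          rw [← lintegral_indicator measurableSet_Icc _]
          refine lintegral_congr fun τ => ?_
          by_cases hmem : τ ∈ Icc (t/2) (t-1)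
          · rw [Set.indicator_of_mem hmem, Set.indicator_of_mem
              (show (t, τ) ∈ E from ⟨ht, hmem.1, hmem.2⟩), hΦ_def]
          · rw [Set.indicator_of_notMem hmem, Set.indicator_of_notMem
              (fun hc => hmem ⟨hc.2.1, hc.2.2⟩)]
      _ ≤ ∫⁻ t, ∫⁻ τ, E.indicator Φ (t, τ) := setLIntegral_le_lintegral _ _
      _ = ∫⁻ τ, ∫⁻ t, E.indicator Φ (t, τ) := lintegral_lintegral_swap swap_meas.aemeasurable
      _ ≤ ∫⁻ τ, (Ioi (0:ℝ)).indicator (fun τ => K * h τ ^ p) τ := by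
          refine lintegral_mono fun τ => ?_
          have hpt : ∀ t : ℝ, E.indicator Φ (t, τ)
              = h τ ^ p * E.indicator (fun x => k x.1 x.2) (t, τ) := by
            intro t
            by_cases hmem : (t, τ) ∈ E
            · rw [Set.indicator_of_mem hmem, Set.indicator_of_mem hmem, hΦ_def]
              exact mul_comm _ _
            · rw [Set.indicator_of_notMem hmem, Set.indicator_of_notMem hmem, mul_zero]
          have hmeas_ind : Measurable fun t : ℝ => E.indicator (fun x => k x.1 x.2) (t, τ) :=
            (hkm.indicator hE).comp (measurable_id.prodMk measurable_const)
          rw [lintegral_congr hpt, lintegral_const_mul _ hmeas_ind]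
          by_cases hτ : 1 < τ
          · rw [Set.indicator_of_mem (show τ ∈ Ioi (0:ℝ) from by
              simp only [mem_Ioi]; linarith)]
            rw [mul_comm K _]
            exact mul_le_mul_right (hB τ hτ) _
          · have hz : ∀ t : ℝ, E.indicator (fun x => k x.1 x.2) (t, τ) = 0 := by
              intro t
              refine Set.indicator_of_notMem (fun hc => hτ ?_) _
              have h1 := hc.1; have h2 := hc.2.1
              simp only at h1 h2; linarith
            rw [lintegral_congr hz, lintegral_zero, mul_zero]
            exact zero_le
      _ = K * ∫⁻ τ in Ioi (0:ℝ), h τ ^ p := by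
          rw [lintegral_indicator measurableSet_Ioi _, lintegral_const_mul' _ _ hKtop]
  have hqp : p / q + 1 = p := by
    have h2 : p - 1 ≠ 0 := ne_of_gt (by linarith)
    rw [hq_def]
    field_simp
    ring
  have hfinal : (∫⁻ t in Ioi (2:ℝ), (ENNReal.ofReal (Real.sqrt (1 + t ^ 2) ^ a) *
        ∫⁻ τ in Icc (t / 2) (t - 1), ENNReal.ofReal ((t - τ) ^ (-(a + δ))) * g τ) ^ p)
      ≤ K ^ p * ∫⁻ τ in Ioi (0:ℝ), h τ ^ p := by
    refine main1.trans ?_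
    refine (mul_le_mul_right main2 _).trans_eq ?_
    rw [← mul_assoc]
    congr 1
    calc K ^ (p/q) * K = K ^ (p/q) * K ^ (1:ℝ) := by rw [ENNReal.rpow_one]
      _ = K ^ (p/q + 1) := (ENNReal.rpow_add_of_nonneg _ _
          (div_nonneg hp0.le hq0.le) zero_le_one).symm
      _ = K ^ p := by rw [hqp]
  have last : (∫⁻ t in Ioi (2:ℝ), (ENNReal.ofReal (Real.sqrt (1 + t ^ 2) ^ a) *
        ∫⁻ τ in Icc (t / 2) (t - 1), ENNReal.ofReal ((t - τ) ^ (-(a + δ))) * g τ) ^ p) ^ (1/p)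
      ≤ K * (∫⁻ τ in Ioi (0:ℝ), h τ ^ p) ^ (1/p) := by
    refine (ENNReal.rpow_le_rpow hfinal (one_div_nonneg.mpr hp0.le)).trans_eq ?_
    rw [ENNReal.mul_rpow_of_nonneg _ _ (one_div_nonneg.mpr hp0.le), ← ENNReal.rpow_mul,
      mul_one_div, div_self hp0.ne', ENNReal.rpow_one]
  simpa only [hK_def, hh_def] using last
end

section
/- Let a ∈ (0,1], δ > 0, p ∈ (1,∞) with pδ > 1, let M > 0 and γ ≥ 0, and set ⟨t⟩ = √(1+t²). Let K : (0,∞) → [0,∞] be measurable with K(s) ≤ M s^{−(a+δ)} for all s ≥ 1 and K(s) ≤ M e^{γ s} for all 0 < s < 1. Then there exists a constant C > 0 (depending only on a, δ, p, M, γ) such that for every measurable function g : (0,∞) → [0,∞], (∫_2^∞ ( ⟨t⟩^a ∫_0^{t} K(t−τ) g(τ) dτ )^p dt)^{1/p} ≤ C (∫_0^∞ (⟨τ⟩ g(τ))^p dτ)^{1/p}. -/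
open MeasureTheory
open scoped ENNReal

namespace Stmt9Aux

open Set Real

/-- The `L¹` majorant kernel: constant on `(0,1)`, power decay `s^{-(1+δ)}` on `[1,∞)`. -/
noncomputable def hker (c₁ δ : ℝ) (s : ℝ) : ℝ≥0∞ :=
  (Set.Ioo (0:ℝ) 1).indicator (fun _ => ENNReal.ofReal c₁) s
    + (Set.Ici (1:ℝ)).indicator (fun u => ENNReal.ofReal (c₁ * u ^ (-(1+δ)))) s

lemma hker_meas (c₁ δ : ℝ) : Measurable (hker c₁ δ) := by
  apply Measurable.add
  · exact measurable_const.indicator measurableSet_Ioo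
  · exact ((measurable_const.mul
      ((measurable_id.pow measurable_const))).ennreal_ofReal).indicator measurableSet_Ici

lemma hker_lt_one {c₁ δ s : ℝ} (h0 : 0 < s) (h1 : s < 1) :
    hker c₁ δ s = ENNReal.ofReal c₁ := by
  unfold hker
  rw [Set.indicator_of_mem (Set.mem_Ioo.2 ⟨h0, h1⟩),
    Set.indicator_of_notMem (by simpa using h1), add_zero]

lemma hker_one_le {c₁ δ s : ℝ} (h1 : 1 ≤ s) :
    hker c₁ δ s = ENNReal.ofReal (c₁ * s ^ (-(1+δ))) := by
  unfold hker
  rw [Set.indicator_of_notMem (fun hs => absurd hs.2 (not_lt.2 h1)),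
    Set.indicator_of_mem (by simpa using h1), zero_add]

lemma hker_fin {c₁ δ : ℝ} (hc : 0 ≤ c₁) (hδ : 0 < δ) :
    (∫⁻ s, hker c₁ δ s) ≠ ∞ := by
  unfold hker
  rw [lintegral_add_left (measurable_const.indicator measurableSet_Ioo),
    lintegral_indicator measurableSet_Ioo, lintegral_indicator measurableSet_Ici]
  apply ENNReal.add_ne_top.2
  constructor
  · rw [setLIntegral_const]
    simp [Real.volume_Ioo]
  · rw [← Measure.restrict_congr_set (μ := volume) Ioi_ae_eq_Ici]
    have hint : IntegrableOn (fun u : ℝ => c₁ * u ^ (-(1+δ))) (Set.Ioi 1) := by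
      exact (integrableOn_Ioi_rpow_of_lt (by linarith) one_pos).const_mul c₁
    have hnn : 0 ≤ᵐ[volume.restrict (Set.Ioi (1:ℝ))] fun u : ℝ => c₁ * u ^ (-(1+δ)) := by
      refine (ae_restrict_iff' measurableSet_Ioi).2 (Filter.Eventually.of_forall fun u hu => ?_)
      have : (0:ℝ) < u := lt_trans one_pos hu
      positivity
    have := (hasFiniteIntegral_iff_ofReal hnn).1 hint.2
    exact this.ne

lemma hker_pos {c₁ δ : ℝ} (hc : 0 < c₁) :
    ENNReal.ofReal c₁ ≤ ∫⁻ s, hker c₁ δ s := by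
  have h1 : (ENNReal.ofReal c₁ : ℝ≥0∞)
      = ∫⁻ s, (Set.Ioo (0:ℝ) 1).indicator (fun _ => ENNReal.ofReal c₁) s := by
    rw [lintegral_indicator measurableSet_Ioo, setLIntegral_const]
    simp [Real.volume_Ioo]
  rw [h1]
  exact lintegral_mono fun s => le_self_add

lemma one_le_sqrt_one_add_sq (x : ℝ) : 1 ≤ Real.sqrt (1 + x^2) := by
  have := Real.sqrt_le_sqrt (show (1:ℝ) ≤ 1 + x^2 by nlinarith)
  simpa using this

lemma self_le_sqrt_one_add_sq {x : ℝ} (hx : 0 ≤ x) : x ≤ Real.sqrt (1 + x^2) := by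
  calc x = Real.sqrt (x^2) := (Real.sqrt_sq hx).symm
  _ ≤ Real.sqrt (1 + x^2) := Real.sqrt_le_sqrt (by nlinarith)

lemma sqrt_one_add_sq_add {τ s : ℝ} (hτ : 0 ≤ τ) (hs : 0 ≤ s) :
    Real.sqrt (1 + (τ + s)^2) ≤ Real.sqrt (1 + τ^2) + s := by
  have h := self_le_sqrt_one_add_sq hτ
  have h2 : Real.sqrt (1 + τ^2)^2 = 1 + τ^2 := Real.sq_sqrt (by positivity)
  have h3 : Real.sqrt (1 + τ^2) + s = Real.sqrt ((Real.sqrt (1 + τ^2) + s)^2) := by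
    rw [Real.sqrt_sq (by positivity)]
  rw [h3]
  apply Real.sqrt_le_sqrt
  nlinarith [mul_le_mul_of_nonneg_left h (by linarith : (0:ℝ) ≤ 2*s)]

/-- The key pointwise kernel bound. -/
lemma kerbound (a δ M γ : ℝ) (ha0 : 0 < a) (ha1 : a ≤ 1) (hδ : 0 < δ) (hM : 0 < M)
    (hγ : 0 ≤ γ) (K : ℝ → ℝ≥0∞)
    (hK1 : ∀ s : ℝ, 1 ≤ s → K s ≤ ENNReal.ofReal (M * s ^ (-(a + δ))))
    (hK0 : ∀ s : ℝ, 0 < s → s < 1 → K s ≤ ENNReal.ofReal (M * Real.exp (γ * s)))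
    {t τ : ℝ} (ht : 2 < t) (hτ0 : 0 < τ) (hτt : τ < t) :
    ENNReal.ofReal (Real.sqrt (1 + t^2) ^ a) * K (t - τ)
      ≤ hker (2*M*(Real.exp γ + 1)) δ (t - τ) * ENNReal.ofReal (Real.sqrt (1 + τ^2))
        + ENNReal.ofReal ((Real.sqrt 2 * M * 2 ^ (1+δ)) * t ^ (-δ)) := by
  have hs0 : 0 < t - τ := by linarith
  have ht0 : (0:ℝ) < t := by linarith
  have hwt1 : 1 ≤ Real.sqrt (1 + t^2) := one_le_sqrt_one_add_sq t
  have hwτ1 : 1 ≤ Real.sqrt (1 + τ^2) := one_le_sqrt_one_add_sq τ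
  have hwτ0 : (0:ℝ) < Real.sqrt (1 + τ^2) := lt_of_lt_of_le one_pos hwτ1
  have hsum : Real.sqrt (1 + t^2) ≤ Real.sqrt (1 + τ^2) + (t - τ) := by
    have := sqrt_one_add_sq_add (τ := τ) (s := t - τ) hτ0.le hs0.le
    simpa [show τ + (t - τ) = t by ring] using this
  have hwa0 : 0 ≤ Real.sqrt (1 + t^2) ^ a := Real.rpow_nonneg (Real.sqrt_nonneg _) _
  rcases lt_or_ge (t - τ) 1 with hs1 | hs1
  · -- short range: `t - τ < 1`
    rw [hker_lt_one hs0 hs1]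
    refine le_trans ?_ le_self_add
    calc ENNReal.ofReal (Real.sqrt (1 + t^2) ^ a) * K (t - τ)
        ≤ ENNReal.ofReal (Real.sqrt (1 + t^2) ^ a) *
            ENNReal.ofReal (M * Real.exp (γ * (t - τ))) :=
          mul_le_mul_right (hK0 _ hs0 hs1) _
      _ = ENNReal.ofReal (Real.sqrt (1 + t^2) ^ a * (M * Real.exp (γ * (t - τ)))) :=
          (ENNReal.ofReal_mul hwa0).symm
      _ ≤ ENNReal.ofReal ((2*M*(Real.exp γ + 1)) * Real.sqrt (1 + τ^2)) := by
          apply ENNReal.ofReal_le_ofReal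
          have h1 : Real.sqrt (1 + t^2) ^ a ≤ Real.sqrt (1 + t^2) := by
            calc Real.sqrt (1 + t^2) ^ a ≤ Real.sqrt (1 + t^2) ^ (1:ℝ) :=
                  Real.rpow_le_rpow_of_exponent_le hwt1 ha1
            _ = Real.sqrt (1 + t^2) := Real.rpow_one _
          have h2 : Real.sqrt (1 + t^2) ≤ 2 * Real.sqrt (1 + τ^2) := by linarith
          have h3 : Real.exp (γ * (t - τ)) ≤ Real.exp γ := by
            apply Real.exp_le_exp.2; nlinarith
          have h4 : (0:ℝ) < Real.exp (γ * (t - τ)) := Real.exp_pos _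
          nlinarith [Real.exp_pos γ, mul_le_mul h2 (mul_le_mul_of_nonneg_left h3 hM.le)
            (by positivity) (by positivity), h1, mul_le_mul_of_nonneg_right h1
            (by positivity : (0:ℝ) ≤ M * Real.exp (γ * (t - τ)))]
      _ = ENNReal.ofReal (2*M*(Real.exp γ + 1)) * ENNReal.ofReal (Real.sqrt (1 + τ^2)) :=
          ENNReal.ofReal_mul (by positivity)
  · -- long range: `1 ≤ t - τ`
    rw [hker_one_le hs1]
    have hKs := hK1 _ hs1
    have hstep : ENNReal.ofReal (Real.sqrt (1 + t^2) ^ a) * K (t - τ)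
        ≤ ENNReal.ofReal (Real.sqrt (1 + t^2) ^ a * (M * (t - τ) ^ (-(a+δ)))) := by
      calc ENNReal.ofReal (Real.sqrt (1 + t^2) ^ a) * K (t - τ)
          ≤ ENNReal.ofReal (Real.sqrt (1 + t^2) ^ a) *
              ENNReal.ofReal (M * (t - τ) ^ (-(a+δ))) := mul_le_mul_right hKs _
        _ = _ := (ENNReal.ofReal_mul hwa0).symm
    rcases le_or_gt (t - τ) τ with hsτ | hτs
    · -- `t - τ ≤ τ` : absorb into the L¹ kernel
      refine le_trans ?_ le_self_add
      refine le_trans hstep ?_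
      rw [← ENNReal.ofReal_mul (by positivity : (0:ℝ) ≤ 2*M*(Real.exp γ + 1) * (t-τ) ^ (-(1+δ)))]
      apply ENNReal.ofReal_le_ofReal
      -- real inequality
      have hsw : t - τ ≤ Real.sqrt (1 + τ^2) :=
        le_trans hsτ (self_le_sqrt_one_add_sq hτ0.le)
      have h2 : Real.sqrt (1 + t^2) ≤ 2 * Real.sqrt (1 + τ^2) := by
        have := self_le_sqrt_one_add_sq hτ0.le
        linarith
      have hwa : Real.sqrt (1 + t^2) ^ a ≤ (2 * Real.sqrt (1 + τ^2)) ^ a :=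
        Real.rpow_le_rpow (Real.sqrt_nonneg _) h2 ha0.le
      have h2a : (2 * Real.sqrt (1 + τ^2)) ^ a = 2 ^ a * Real.sqrt (1 + τ^2) ^ a :=
        Real.mul_rpow (by norm_num) (Real.sqrt_nonneg _)
      have h2a2 : (2:ℝ) ^ a ≤ 2 := by
        calc (2:ℝ) ^ a ≤ (2:ℝ) ^ (1:ℝ) := Real.rpow_le_rpow_of_exponent_le one_le_two ha1
        _ = 2 := Real.rpow_one _
      have hsplit : Real.sqrt (1 + τ^2) ^ a
          = Real.sqrt (1 + τ^2) ^ (a-1) * Real.sqrt (1 + τ^2) := by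
        have h := Real.rpow_add hwτ0 (a-1) 1
        rw [Real.rpow_one] at h
        rw [← h]
        congr 1
        ring
      have hbase : Real.sqrt (1 + τ^2) ^ (a-1) ≤ (t - τ) ^ (a-1) :=
        Real.rpow_le_rpow_of_nonpos hs0 hsw (by linarith)
      have hcomb : (t - τ) ^ (a-1) * (t - τ) ^ (-(a+δ)) = (t - τ) ^ (-(1+δ)) := by
        rw [← Real.rpow_add hs0]; ring_nf
      have hne : (0:ℝ) ≤ (t - τ) ^ (-(a+δ)) := Real.rpow_nonneg hs0.le _
      have hne2 : (0:ℝ) ≤ (t - τ) ^ (a-1) := Real.rpow_nonneg hs0.le _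
      have hne3 : (0:ℝ) ≤ (t - τ) ^ (-(1+δ)) := Real.rpow_nonneg hs0.le _
      have hexp1 : (1:ℝ) ≤ Real.exp γ + 1 := by nlinarith [Real.exp_pos γ]
      calc Real.sqrt (1 + t^2) ^ a * (M * (t - τ) ^ (-(a+δ)))
          ≤ (2 ^ a * (Real.sqrt (1 + τ^2) ^ (a-1) * Real.sqrt (1 + τ^2)))
              * (M * (t - τ) ^ (-(a+δ))) := by
            rw [← hsplit, ← h2a]
            exact mul_le_mul_of_nonneg_right hwa (by positivity)
        _ ≤ (2 * ((t - τ) ^ (a-1) * Real.sqrt (1 + τ^2))) * (M * (t - τ) ^ (-(a+δ))) := by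
            apply mul_le_mul_of_nonneg_right _ (by positivity)
            exact mul_le_mul h2a2 (mul_le_mul_of_nonneg_right hbase (Real.sqrt_nonneg _))
              (by positivity) (by norm_num)
        _ = (2*M) * ((t - τ) ^ (a-1) * (t - τ) ^ (-(a+δ))) * Real.sqrt (1 + τ^2) := by ring
        _ = (2*M) * (t - τ) ^ (-(1+δ)) * Real.sqrt (1 + τ^2) := by rw [hcomb]
        _ ≤ 2*M*(Real.exp γ + 1) * (t - τ) ^ (-(1+δ)) * Real.sqrt (1 + τ^2) := by
            apply mul_le_mul_of_nonneg_right _ (Real.sqrt_nonneg _)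
            apply mul_le_mul_of_nonneg_right _ hne3
            nlinarith
    · -- `τ < t - τ` : absorb into the decaying term
      refine le_trans ?_ le_add_self
      refine le_trans hstep ?_
      apply ENNReal.ofReal_le_ofReal
      have ht2 : t / 2 < t - τ := by linarith
      have ht20 : (0:ℝ) < t / 2 := by linarith
      have hsq2 : (1:ℝ) ≤ Real.sqrt 2 := by
        have := Real.sqrt_le_sqrt (show (1:ℝ) ≤ 2 by norm_num)
        simpa using this
      have hwt : Real.sqrt (1 + t^2) ≤ Real.sqrt 2 * t := by
        rw [show Real.sqrt 2 * t = Real.sqrt (2 * t^2) by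
          rw [Real.sqrt_mul (by norm_num), Real.sqrt_sq ht0.le]]
        exact Real.sqrt_le_sqrt (by nlinarith)
      have hwta : Real.sqrt (1 + t^2) ^ a ≤ Real.sqrt 2 * t ^ a := by
        calc Real.sqrt (1 + t^2) ^ a ≤ (Real.sqrt 2 * t) ^ a :=
              Real.rpow_le_rpow (Real.sqrt_nonneg _) hwt ha0.le
          _ = Real.sqrt 2 ^ a * t ^ a := Real.mul_rpow (Real.sqrt_nonneg _) ht0.le
          _ ≤ Real.sqrt 2 * t ^ a := by
              apply mul_le_mul_of_nonneg_right _ (Real.rpow_nonneg ht0.le _)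
              calc Real.sqrt 2 ^ a ≤ Real.sqrt 2 ^ (1:ℝ) :=
                    Real.rpow_le_rpow_of_exponent_le hsq2 ha1
                _ = Real.sqrt 2 := Real.rpow_one _
      have hs' : (t - τ) ^ (-(a+δ)) ≤ (t/2) ^ (-(a+δ)) :=
        Real.rpow_le_rpow_of_nonpos ht20 ht2.le (by linarith)
      have ht2eq : (t/2) ^ (-(a+δ)) = 2 ^ (a+δ) * t ^ (-(a+δ)) := by
        rw [div_eq_mul_inv, Real.mul_rpow ht0.le (by norm_num),
          Real.inv_rpow (by norm_num), ← Real.rpow_neg (by norm_num), neg_neg, mul_comm]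
      have hta : t ^ a * t ^ (-(a+δ)) = t ^ (-δ) := by
        rw [← Real.rpow_add ht0]; ring_nf
      have h2ad : (2:ℝ) ^ (a+δ) ≤ 2 ^ (1+δ) :=
        Real.rpow_le_rpow_of_exponent_le one_le_two (by linarith)
      have h2ad0 : (0:ℝ) ≤ (2:ℝ) ^ (a+δ) := Real.rpow_nonneg (by norm_num) _
      calc Real.sqrt (1 + t^2) ^ a * (M * (t - τ) ^ (-(a+δ)))
          ≤ (Real.sqrt 2 * t ^ a) * (M * (2 ^ (a+δ) * t ^ (-(a+δ)))) := by
            apply mul_le_mul hwta _ (by positivity) (by positivity)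
            exact mul_le_mul_of_nonneg_left (hs'.trans_eq ht2eq) hM.le
        _ = Real.sqrt 2 * M * 2 ^ (a+δ) * (t ^ a * t ^ (-(a+δ))) := by ring
        _ = Real.sqrt 2 * M * 2 ^ (a+δ) * t ^ (-δ) := by rw [hta]
        _ ≤ Real.sqrt 2 * M * 2 ^ (1+δ) * t ^ (-δ) := by
            apply mul_le_mul_of_nonneg_right _ (Real.rpow_nonneg ht0.le _)
            apply mul_le_mul_of_nonneg_left h2ad (by positivity)

lemma lint_rpow_fin {r c : ℝ} (hr : r < -1) (hc : 0 < c) :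
    (∫⁻ u in Set.Ioi c, ENNReal.ofReal (u ^ r)) ≠ ∞ := by
  have hint := integrableOn_Ioi_rpow_of_lt hr hc
  have hnn : 0 ≤ᵐ[volume.restrict (Set.Ioi c)] fun u : ℝ => u ^ r :=
    (ae_restrict_iff' measurableSet_Ioi).2 (Filter.Eventually.of_forall fun u hu =>
      Real.rpow_nonneg (le_of_lt (lt_trans hc hu)) _)
  exact ((hasFiniteIntegral_iff_ofReal hnn).1 hint.2).ne

lemma trans_left (c₁ δ t : ℝ) (s : Set ℝ) :
    (∫⁻ τ in s, hker c₁ δ (t - τ)) ≤ ∫⁻ u, hker c₁ δ u :=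
  le_trans (setLIntegral_le_lintegral _ _)
    (le_of_eq ((Measure.measurePreserving_sub_left volume t).lintegral_comp (hker_meas _ _)))

lemma trans_right (c₁ δ τ : ℝ) (s : Set ℝ) :
    (∫⁻ t in s, hker c₁ δ (t - τ)) ≤ ∫⁻ u, hker c₁ δ u :=
  le_trans (setLIntegral_le_lintegral _ _)
    (le_of_eq ((measurePreserving_sub_right volume τ).lintegral_comp (hker_meas _ _)))

end Stmt9Aux

open Set Stmt9Aux

/-- Scalar core of Proposition 4.1: let `a ∈ (0,1]`, `δ > 0`, `p ∈ (1,∞)` with `pδ > 1`,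
`M > 0`, `γ ≥ 0`, and let `K : (0,∞) → [0,∞]` be measurable with `K(s) ≤ M s^{-(a+δ)}`
for `s ≥ 1` and `K(s) ≤ M e^{γs}` for `0 < s < 1`. Then there is `C > 0`
(depending only on `a, δ, p, M, γ`) such that for every measurable `g : (0,∞) → [0,∞]`,
`(∫_2^∞ (⟨t⟩^a ∫_0^t K(t-τ) g(τ) dτ)^p dt)^{1/p} ≤ C (∫_0^∞ (⟨τ⟩ g(τ))^p dτ)^{1/p}`,
where `⟨t⟩ = √(1+t²)`. -/
theorem stmt9 (a δ p M γ : ℝ) (ha0 : 0 < a) (ha1 : a ≤ 1) (hδ : 0 < δ) (hp : 1 < p)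
    (hpδ : 1 < p * δ) (hM : 0 < M) (hγ : 0 ≤ γ) :
    ∃ C : ℝ, 0 < C ∧
      ∀ K : ℝ → ℝ≥0∞, Measurable K →
        (∀ s : ℝ, 1 ≤ s → K s ≤ ENNReal.ofReal (M * s ^ (-(a + δ)))) →
        (∀ s : ℝ, 0 < s → s < 1 → K s ≤ ENNReal.ofReal (M * Real.exp (γ * s))) →
        ∀ g : ℝ → ℝ≥0∞, Measurable g →
          (∫⁻ t in Set.Ioi (2 : ℝ),
              (ENNReal.ofReal (Real.sqrt (1 + t ^ 2) ^ a) *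
                ∫⁻ τ in Set.Ioc (0 : ℝ) t, K (t - τ) * g τ) ^ p) ^ (1 / p)
            ≤ ENNReal.ofReal C *
              (∫⁻ τ in Set.Ioi (0 : ℝ),
                (ENNReal.ofReal (Real.sqrt (1 + τ ^ 2)) * g τ) ^ p) ^ (1 / p) := by
  have hp0 : (0:ℝ) < p := lt_trans one_pos hp
  have hpq : p.HolderConjugate (Real.conjExponent p) := Real.HolderConjugate.conjExponent hp
  set q := Real.conjExponent p with hqdef
  have hq1 : 1 < q := hpq.symm.lt
  have hq0 : (0:ℝ) < q := lt_trans one_pos hq1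
  set c₁ := 2*M*(Real.exp γ + 1) with hc₁def
  set c₂ := Real.sqrt 2 * M * 2 ^ (1+δ) with hc₂def
  have hexpγ : (0:ℝ) < Real.exp γ := Real.exp_pos γ
  have hsqrt2 : (0:ℝ) < Real.sqrt 2 := Real.sqrt_pos.2 (by norm_num)
  have h2pow : (0:ℝ) < (2:ℝ) ^ (1+δ) := Real.rpow_pos_of_pos (by norm_num) _
  have hc₁0 : 0 < c₁ := by positivity
  have hc₂0 : 0 < c₂ := by positivity
  set H := ∫⁻ s, hker c₁ δ s with hHdef
  have hHfin : H ≠ ∞ := hker_fin hc₁0.le hδ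
  have hH0 : H ≠ 0 := by
    have h1 : ENNReal.ofReal c₁ ≤ H := hker_pos hc₁0
    intro h
    rw [h, le_zero_iff, ENNReal.ofReal_eq_zero] at h1
    linarith
  have hsqmeas : Measurable fun τ : ℝ => Real.sqrt (1 + τ^2) :=
    Real.continuous_sqrt.measurable.comp ((measurable_id.pow_const 2).const_add 1)
  set v : ℝ → ℝ≥0∞ := fun τ => ENNReal.ofReal ((Real.sqrt (1 + τ^2))⁻¹) with hvdef
  have hvmeas : Measurable v := hsqmeas.inv.ennreal_ofReal
  set Vraw := ∫⁻ τ in Set.Ioi (0:ℝ), v τ ^ q with hVrawdef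
  have hVrawfin : Vraw ≠ ∞ := by
    have hbound : ∀ τ ∈ Set.Ioi (0:ℝ), v τ ^ q ≤
        (Set.Ioc (0:ℝ) 1).indicator (fun _ => 1) τ
          + (Set.Ioi (1:ℝ)).indicator (fun u => ENNReal.ofReal (u ^ (-q))) τ := by
      intro τ hτ
      rcases le_or_gt τ 1 with h1 | h1
      · refine le_trans ?_ le_self_add
        rw [Set.indicator_of_mem (Set.mem_Ioc.2 ⟨hτ, h1⟩)]
        refine ENNReal.rpow_le_one ?_ hq0.le
        rw [hvdef]
        dsimp only
        calc ENNReal.ofReal ((Real.sqrt (1 + τ^2))⁻¹) ≤ ENNReal.ofReal 1 :=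
            ENNReal.ofReal_le_ofReal (inv_le_one_of_one_le₀ (one_le_sqrt_one_add_sq τ))
          _ = 1 := ENNReal.ofReal_one
      · refine le_trans ?_ le_add_self
        rw [Set.indicator_of_mem (Set.mem_Ioi.2 h1)]
        have hτ0 : (0:ℝ) < τ := lt_trans one_pos h1
        have h2 : (Real.sqrt (1 + τ^2))⁻¹ ≤ τ⁻¹ :=
          (inv_le_inv₀ (by positivity) hτ0).2 (self_le_sqrt_one_add_sq hτ0.le)
        calc v τ ^ q ≤ ENNReal.ofReal (τ⁻¹) ^ q :=
              ENNReal.rpow_le_rpow (ENNReal.ofReal_le_ofReal h2) hq0.le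
          _ = ENNReal.ofReal ((τ⁻¹) ^ q) :=
              ENNReal.ofReal_rpow_of_nonneg (by positivity) hq0.le
          _ = ENNReal.ofReal (τ ^ (-q)) := by
              rw [Real.inv_rpow hτ0.le, ← Real.rpow_neg hτ0.le]
    have h1 : Vraw ≤ ∫⁻ τ in Set.Ioi (0:ℝ),
        ((Set.Ioc (0:ℝ) 1).indicator (fun _ => 1) τ
          + (Set.Ioi (1:ℝ)).indicator (fun u => ENNReal.ofReal (u ^ (-q))) τ) :=
      setLIntegral_mono' measurableSet_Ioi hbound
    have h2 := le_trans h1 (setLIntegral_le_lintegral _ _)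
    rw [lintegral_add_left (measurable_const.indicator measurableSet_Ioc),
      lintegral_indicator measurableSet_Ioc, lintegral_indicator measurableSet_Ioi,
      setLIntegral_const] at h2
    refine ne_top_of_le_ne_top ?_ h2
    refine ENNReal.add_ne_top.2 ⟨?_, lint_rpow_fin (by linarith) one_pos⟩
    simp [Real.volume_Ioc]
  set V := Vraw ^ (1/q) with hVdef
  have hVfin : V ≠ ∞ := ENNReal.rpow_ne_top_of_nonneg (by positivity) hVrawfin
  set Iraw := ∫⁻ t in Set.Ioi (2:ℝ), ENNReal.ofReal (t ^ (-(δ*p))) with hIrawdef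
  have hIrawfin : Iraw ≠ ∞ := lint_rpow_fin (by nlinarith) two_pos
  set Iδ := Iraw ^ (1/p) with hIδdef
  have hIδfin : Iδ ≠ ∞ := ENNReal.rpow_ne_top_of_nonneg (by positivity) hIrawfin
  set E := H + ENNReal.ofReal c₂ * V * Iδ with hEdef
  have hEfin : E ≠ ∞ := by
    refine ENNReal.add_ne_top.2 ⟨hHfin, ?_⟩
    exact ENNReal.mul_ne_top (ENNReal.mul_ne_top ENNReal.ofReal_ne_top hVfin) hIδfin
  refine ⟨E.toReal + 1, by positivity, ?_⟩
  intro K hKmeas hK1 hK0 g hg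
  set G : ℝ → ℝ≥0∞ := fun τ => ENNReal.ofReal (Real.sqrt (1 + τ ^ 2)) * g τ with hGdef
  have hGmeas : Measurable G := hsqmeas.ennreal_ofReal.mul hg
  set N := (∫⁻ τ in Set.Ioi (0:ℝ), G τ ^ p) ^ (1/p) with hNdef
  set A : ℝ → ℝ≥0∞ := fun t => ∫⁻ τ in Set.Ioi (0:ℝ), hker c₁ δ (t - τ) * G τ with hAdef
  set D := ∫⁻ τ in Set.Ioi (0:ℝ), g τ with hDdef
  set B : ℝ → ℝ≥0∞ := fun t => ENNReal.ofReal (c₂ * t ^ (-δ)) * D with hBdef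
  -- Step 1 : pointwise (in t) domination of the inner integral
  have step1 : ∀ t ∈ Set.Ioi (2:ℝ),
      ENNReal.ofReal (Real.sqrt (1 + t ^ 2) ^ a) *
        (∫⁻ τ in Set.Ioc (0:ℝ) t, K (t - τ) * g τ) ≤ A t + B t := by
    intro t ht
    have hf1 : Measurable fun τ : ℝ => K (t - τ) * g τ :=
      (hKmeas.comp (measurable_const.sub measurable_id)).mul hg
    have hf2 : Measurable fun τ : ℝ => hker c₁ δ (t - τ) * G τ :=
      ((hker_meas c₁ δ).comp (measurable_const.sub measurable_id)).mul hGmeas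
    rw [← Measure.restrict_congr_set (μ := volume) Ioo_ae_eq_Ioc,
      ← lintegral_const_mul _ hf1]
    calc ∫⁻ τ in Set.Ioo (0:ℝ) t,
          ENNReal.ofReal (Real.sqrt (1 + t ^ 2) ^ a) * (K (t - τ) * g τ)
        ≤ ∫⁻ τ in Set.Ioo (0:ℝ) t,
            (hker c₁ δ (t - τ) * G τ + ENNReal.ofReal (c₂ * t ^ (-δ)) * g τ) := by
          refine setLIntegral_mono' measurableSet_Ioo fun τ hτ => ?_
          have hk := kerbound a δ M γ ha0 ha1 hδ hM hγ K hK1 hK0 ht hτ.1 hτ.2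
          calc ENNReal.ofReal (Real.sqrt (1 + t ^ 2) ^ a) * (K (t - τ) * g τ)
              = (ENNReal.ofReal (Real.sqrt (1 + t ^ 2) ^ a) * K (t - τ)) * g τ :=
                (mul_assoc _ _ _).symm
            _ ≤ (hker c₁ δ (t - τ) * ENNReal.ofReal (Real.sqrt (1 + τ ^ 2))
                  + ENNReal.ofReal (c₂ * t ^ (-δ))) * g τ := mul_le_mul_left hk _
            _ = hker c₁ δ (t - τ) * G τ + ENNReal.ofReal (c₂ * t ^ (-δ)) * g τ := by
                rw [add_mul, mul_assoc]
      _ ≤ ∫⁻ τ in Set.Ioi (0:ℝ),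
            (hker c₁ δ (t - τ) * G τ + ENNReal.ofReal (c₂ * t ^ (-δ)) * g τ) :=
          lintegral_mono' (Measure.restrict_mono (fun x hx => hx.1) le_rfl) le_rfl
      _ = A t + B t := by
          rw [lintegral_add_left hf2, lintegral_const_mul _ hg]
  -- measurability of A and B
  have hAmeas : Measurable A := by
    have huc : Measurable (Function.uncurry fun t τ : ℝ => hker c₁ δ (t - τ) * G τ) :=
      ((hker_meas c₁ δ).comp (measurable_fst.sub measurable_snd)).mul
        (hGmeas.comp measurable_snd)
    exact Measurable.lintegral_prod_right (f := fun t τ : ℝ => hker c₁ δ (t - τ) * G τ) huc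
  have hBmeas : Measurable B :=
    ((measurable_const.mul (measurable_id.pow measurable_const)).ennreal_ofReal).mul_const D
  -- exponent arithmetic
  have hqp1 : 1/q + 1/p = 1 := by
    rw [one_div, one_div, add_comm]
    exact hpq.inv_add_inv_eq_one
  have hppq : 1/q * p + 1 = p := by
    have h1 : 1/q = 1 - 1/p := by linarith
    rw [h1]
    field_simp
    ring
  -- Step A : the convolution term
  have stepA : (∫⁻ t in Set.Ioi (2:ℝ), A t ^ p) ^ (1/p) ≤ H * N := by
    have hAt : ∀ t : ℝ, A t ^ p
        ≤ H ^ (1/q * p) * ∫⁻ τ in Set.Ioi (0:ℝ), hker c₁ δ (t - τ) * G τ ^ p := by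
      intro t
      have hkm : Measurable fun τ : ℝ => hker c₁ δ (t - τ) :=
        (hker_meas c₁ δ).comp (measurable_const.sub measurable_id)
      have hsplit : ∀ τ : ℝ, hker c₁ δ (t - τ) * G τ
          = (hker c₁ δ (t - τ) ^ (1/q)) * ((hker c₁ δ (t - τ) ^ (1/p)) * G τ) := by
        intro τ
        have hx : hker c₁ δ (t - τ) ^ (1/q) * hker c₁ δ (t - τ) ^ (1/p)
            = hker c₁ δ (t - τ) := by
          rw [← ENNReal.rpow_add_of_nonneg _ _ (by positivity) (by positivity), hqp1,
            ENNReal.rpow_one]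
        conv_rhs => rw [← mul_assoc]
        rw [hx]
      have hhold := ENNReal.lintegral_mul_le_Lp_mul_Lq (volume.restrict (Set.Ioi (0:ℝ)))
        hpq.symm (f := fun τ => hker c₁ δ (t - τ) ^ (1/q))
        (g := fun τ => hker c₁ δ (t - τ) ^ (1/p) * G τ)
        (hkm.pow measurable_const).aemeasurable
        ((hkm.pow measurable_const).mul hGmeas).aemeasurable
    -- simplify the Hölder bound
      have hQ : ∀ x : ℝ≥0∞, (x ^ (1/q)) ^ q = x := by
        intro x
        rw [← ENNReal.rpow_mul, one_div, inv_mul_cancel₀ (ne_of_gt hq0), ENNReal.rpow_one]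
      have hP : ∀ x : ℝ≥0∞, (x ^ (1/p)) ^ p = x := by
        intro x
        rw [← ENNReal.rpow_mul, one_div, inv_mul_cancel₀ (ne_of_gt hp0), ENNReal.rpow_one]
      have hA1 : A t ≤ (∫⁻ τ in Set.Ioi (0:ℝ), hker c₁ δ (t - τ)) ^ (1/q)
          * (∫⁻ τ in Set.Ioi (0:ℝ), hker c₁ δ (t - τ) * G τ ^ p) ^ (1/p) := by
        refine le_trans (le_of_eq ?_) (le_trans hhold (le_of_eq ?_))
        · rw [hAdef]
          exact lintegral_congr fun τ => hsplit τ
        · congr 1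
          · congr 1
            exact lintegral_congr fun τ => hQ _
          · congr 1
            refine lintegral_congr fun τ => ?_
            rw [ENNReal.mul_rpow_of_nonneg _ _ hp0.le, hP]
      have hA2 : A t ≤ H ^ (1/q)
          * (∫⁻ τ in Set.Ioi (0:ℝ), hker c₁ δ (t - τ) * G τ ^ p) ^ (1/p) := by
        refine le_trans hA1 (mul_le_mul_left (ENNReal.rpow_le_rpow ?_ (by positivity)) _)
        exact trans_left c₁ δ t _
      calc A t ^ p ≤ (H ^ (1/q)
            * (∫⁻ τ in Set.Ioi (0:ℝ), hker c₁ δ (t - τ) * G τ ^ p) ^ (1/p)) ^ p :=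
          ENNReal.rpow_le_rpow hA2 hp0.le
        _ = H ^ (1/q * p) * ∫⁻ τ in Set.Ioi (0:ℝ), hker c₁ δ (t - τ) * G τ ^ p := by
            rw [ENNReal.mul_rpow_of_nonneg _ _ hp0.le, ← ENNReal.rpow_mul, hP]
    have hswap : (∫⁻ t in Set.Ioi (2:ℝ), ∫⁻ τ in Set.Ioi (0:ℝ),
          hker c₁ δ (t - τ) * G τ ^ p)
        = ∫⁻ τ in Set.Ioi (0:ℝ), ∫⁻ t in Set.Ioi (2:ℝ),
            hker c₁ δ (t - τ) * G τ ^ p := by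
      apply lintegral_lintegral_swap
      exact (((hker_meas c₁ δ).comp (measurable_fst.sub measurable_snd)).mul
        ((hGmeas.comp measurable_snd).pow measurable_const)).aemeasurable
    have hinner : ∀ τ : ℝ, (∫⁻ t in Set.Ioi (2:ℝ), hker c₁ δ (t - τ) * G τ ^ p)
        ≤ H * G τ ^ p := by
      intro τ
      have hf3 : Measurable fun t : ℝ => hker c₁ δ (t - τ) :=
        (hker_meas c₁ δ).comp (measurable_id.sub measurable_const)
      rw [lintegral_mul_const _ hf3]
      exact mul_le_mul_left (trans_right c₁ δ τ _) _
    have hint : (∫⁻ t in Set.Ioi (2:ℝ), A t ^ p)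
        ≤ H ^ (1/q * p) * (H * ∫⁻ τ in Set.Ioi (0:ℝ), G τ ^ p) := by
      calc (∫⁻ t in Set.Ioi (2:ℝ), A t ^ p)
          ≤ ∫⁻ t in Set.Ioi (2:ℝ), H ^ (1/q * p) * ∫⁻ τ in Set.Ioi (0:ℝ),
              hker c₁ δ (t - τ) * G τ ^ p := lintegral_mono fun t => hAt t
        _ = H ^ (1/q * p) * ∫⁻ t in Set.Ioi (2:ℝ), ∫⁻ τ in Set.Ioi (0:ℝ),
              hker c₁ δ (t - τ) * G τ ^ p :=
            lintegral_const_mul' _ _ (ENNReal.rpow_ne_top_of_nonneg (by positivity) hHfin)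
        _ = H ^ (1/q * p) * ∫⁻ τ in Set.Ioi (0:ℝ), ∫⁻ t in Set.Ioi (2:ℝ),
              hker c₁ δ (t - τ) * G τ ^ p := by rw [hswap]
        _ ≤ H ^ (1/q * p) * ∫⁻ τ in Set.Ioi (0:ℝ), H * G τ ^ p :=
            mul_le_mul_right (lintegral_mono fun τ => hinner τ) _
        _ = H ^ (1/q * p) * (H * ∫⁻ τ in Set.Ioi (0:ℝ), G τ ^ p) := by
            rw [lintegral_const_mul' _ _ hHfin]
    have hHe : H ^ (1/q * p) * H = H ^ p := by
      have : H ^ (1/q * p) * H = H ^ (1/q * p) * H ^ (1:ℝ) := by rw [ENNReal.rpow_one]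
      rw [this, ← ENNReal.rpow_add _ _ hH0 hHfin, hppq]
    calc (∫⁻ t in Set.Ioi (2:ℝ), A t ^ p) ^ (1/p)
        ≤ (H ^ (1/q * p) * (H * ∫⁻ τ in Set.Ioi (0:ℝ), G τ ^ p)) ^ (1/p) :=
          ENNReal.rpow_le_rpow hint (by positivity)
      _ = (H ^ p * ∫⁻ τ in Set.Ioi (0:ℝ), G τ ^ p) ^ (1/p) := by
          rw [← mul_assoc, hHe]
      _ = H * N := by
          rw [ENNReal.mul_rpow_of_nonneg _ _ (by positivity), ← ENNReal.rpow_mul,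
            mul_one_div_cancel (ne_of_gt hp0), ENNReal.rpow_one]
  -- Step D : Hölder bound for the mass of g
  have hD : D ≤ V * N := by
    have hgv : ∀ τ : ℝ, g τ = v τ * G τ := by
      intro τ
      have hw0 : (0:ℝ) < Real.sqrt (1 + τ ^ 2) :=
        lt_of_lt_of_le one_pos (one_le_sqrt_one_add_sq τ)
      rw [hGdef, hvdef]
      dsimp only
      rw [← mul_assoc, ← ENNReal.ofReal_mul (by positivity),
        inv_mul_cancel₀ (ne_of_gt hw0), ENNReal.ofReal_one, one_mul]
    calc D = ∫⁻ τ in Set.Ioi (0:ℝ), v τ * G τ := lintegral_congr fun τ => by rw [← hgv]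
      _ ≤ (∫⁻ τ in Set.Ioi (0:ℝ), v τ ^ q) ^ (1/q)
          * (∫⁻ τ in Set.Ioi (0:ℝ), G τ ^ p) ^ (1/p) :=
        ENNReal.lintegral_mul_le_Lp_mul_Lq _ hpq.symm hvmeas.aemeasurable hGmeas.aemeasurable
      _ = V * N := rfl
  -- Step B : the decaying term
  have stepB : (∫⁻ t in Set.Ioi (2:ℝ), B t ^ p) ^ (1/p)
      ≤ (ENNReal.ofReal c₂ * V * Iδ) * N := by
    have hBp : ∀ t ∈ Set.Ioi (2:ℝ), B t ^ p
        = ((ENNReal.ofReal c₂) ^ p * D ^ p) * ENNReal.ofReal (t ^ (-(δ*p))) := by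
      intro t ht
      have ht0 : (0:ℝ) < t := lt_trans two_pos ht
      rw [hBdef]
      dsimp only
      rw [ENNReal.ofReal_mul hc₂0.le, ENNReal.mul_rpow_of_nonneg _ _ hp0.le,
        ENNReal.mul_rpow_of_nonneg _ _ hp0.le,
        ENNReal.ofReal_rpow_of_nonneg (Real.rpow_nonneg ht0.le _) hp0.le,
        ← Real.rpow_mul ht0.le, neg_mul]
      ring
    have hfm : Measurable fun t : ℝ => ENNReal.ofReal (t ^ (-(δ*p))) :=
      (measurable_id.pow measurable_const).ennreal_ofReal
    have hInt : (∫⁻ t in Set.Ioi (2:ℝ), B t ^ p)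
        = ((ENNReal.ofReal c₂) ^ p * D ^ p) * Iraw := by
      rw [setLIntegral_congr_fun measurableSet_Ioi hBp]
      exact lintegral_const_mul _ hfm
    calc (∫⁻ t in Set.Ioi (2:ℝ), B t ^ p) ^ (1/p)
        = (((ENNReal.ofReal c₂) ^ p * D ^ p) * Iraw) ^ (1/p) := by rw [hInt]
      _ = ENNReal.ofReal c₂ * D * Iδ := by
          rw [ENNReal.mul_rpow_of_nonneg _ _ (by positivity),
            ENNReal.mul_rpow_of_nonneg _ _ (by positivity),
            ← ENNReal.rpow_mul, ← ENNReal.rpow_mul,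
            mul_one_div_cancel (ne_of_gt hp0), ENNReal.rpow_one, ENNReal.rpow_one]
      _ ≤ ENNReal.ofReal c₂ * (V * N) * Iδ :=
          mul_le_mul_left (mul_le_mul_right hD _) _
      _ = (ENNReal.ofReal c₂ * V * Iδ) * N := by ring
  -- final assembly
  calc (∫⁻ t in Set.Ioi (2 : ℝ),
        (ENNReal.ofReal (Real.sqrt (1 + t ^ 2) ^ a) *
          ∫⁻ τ in Set.Ioc (0 : ℝ) t, K (t - τ) * g τ) ^ p) ^ (1 / p)
      ≤ (∫⁻ t in Set.Ioi (2:ℝ), (A t + B t) ^ p) ^ (1/p) := by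
        refine ENNReal.rpow_le_rpow ?_ (by positivity)
        refine setLIntegral_mono' measurableSet_Ioi fun t ht => ?_
        exact ENNReal.rpow_le_rpow (step1 t ht) hp0.le
    _ ≤ (∫⁻ t in Set.Ioi (2:ℝ), A t ^ p) ^ (1/p)
        + (∫⁻ t in Set.Ioi (2:ℝ), B t ^ p) ^ (1/p) :=
        ENNReal.lintegral_Lp_add_le hAmeas.aemeasurable hBmeas.aemeasurable hp.le
    _ ≤ H * N + (ENNReal.ofReal c₂ * V * Iδ) * N := add_le_add stepA stepB
    _ = E * N := by rw [hEdef]; ring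
    _ ≤ ENNReal.ofReal (E.toReal + 1) * N := by
        refine mul_le_mul_left ?_ _
        rw [ENNReal.ofReal_add ENNReal.toReal_nonneg zero_le_one,
          ENNReal.ofReal_toReal hEfin, ENNReal.ofReal_one]
        exact le_self_add
end
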